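/- arXiv:2101.11233 — 7 statements merged into one kernel-verified Lean document; each statement's English description precedes it below -/
import Mathlib

section
/- If x1,x2,x3,x4,x5 are real numbers in [0,1] with x1+x2+x3+x4+x5 = 1 and 3*x1+x2-x3-x4-3*x5 ≥ 0, then x1^2/2 + x2^2/2 + x3^2/2 - 3*x4^2/16 - x5^2/2 + x1*x2 + x1*x3 + x2*x3 + x1*x4/2 + x1*x5/2 - x4*x5/2 ≥ 5/256. -/
theorem stmt_0 (x1 x2 x3 x4 x5 : ℝ)
    (h1 : x1 ∈ Set.Icc (0:ℝ) 1) (h2 : x2 ∈ Set.Icc (0:ℝ) 1)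
    (h3 : x3 ∈ Set.Icc (0:ℝ) 1) (h4 : x4 ∈ Set.Icc (0:ℝ) 1)
    (h5 : x5 ∈ Set.Icc (0:ℝ) 1)
    (hsum : x1 + x2 + x3 + x4 + x5 = 1)
    (hlin : 3*x1 + x2 - x3 - x4 - 3*x5 ≥ 0) :
    x1^2/2 + x2^2/2 + x3^2/2 - 3*x4^2/16 - x5^2/2
      + x1*x2 + x1*x3 + x2*x3 + x1*x4/2 + x1*x5/2 - x4*x5/2 ≥ 5/256 := by
  obtain ⟨a1, b1⟩ := h1
  obtain ⟨a2, b2⟩ := h2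
  obtain ⟨a3, b3⟩ := h3
  obtain ⟨a4, b4⟩ := h4
  obtain ⟨a5, b5⟩ := h5
  have hx2 : x2 = 1 - x1 - x3 - x4 - x5 := by linarith
  subst hx2
  -- derived linear facts
  have hA : (0:ℝ) ≤ x1 - x4 - 2*x5 + 1/2 := by linarith
  have hB : (0:ℝ) ≤ 3/2 - 2*x4 - 3*x5 := by linarith
  have F1 : (0:ℝ) ≤ (x4 + x5) * (x1 - x4 - 2*x5 + 1/2) :=
    mul_nonneg (by linarith) hA
  have F2 : (0:ℝ) ≤ (3/2 - 2*x4 - 3*x5) * (3/2 - 2*x4 - 3*x5) :=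
    mul_nonneg hB hB
  have F3 : (0:ℝ) ≤ x4 * (3/2 - 2*x4 - 3*x5) := mul_nonneg a4 hB
  have F4 : (0:ℝ) ≤ x5 * (3/2 - 2*x4 - 3*x5) := mul_nonneg a5 hB
  have F5 : (0:ℝ) ≤ x4 * x5 := mul_nonneg a4 a5
  have F6 : (0:ℝ) ≤ x5 * x5 := mul_nonneg a5 a5
  nlinarith [F1, F2, F3, F4, F5, F6]
end

section
/- Every simple graph G on n ≥ 2 vertices with exactly (1/2)*C(n,2) edges has a vertex u whose degree satisfies n/4 ≤ deg(u) ≤ 3n/4 - 1. -/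
open Finset

private lemma aux_key (n : ℕ) (hn : 2 ≤ n) (G : SimpleGraph (Fin n)) [DecidableRel G.Adj]
    (A : Finset (Fin n))
    (hA : ∀ v ∈ A, 4 * G.degree v + 1 ≤ n)
    (hsum : 2 * ∑ v, G.degree v = n * (n - 1)) :
    n + 1 ≤ 2 * Aᶜ.card := by
  classical
  set B := Aᶜ with hB
  set a := A.card with ha
  set b := B.card with hb
  set SA := ∑ v ∈ A, G.degree v with hSA
  set SB := ∑ v ∈ B, G.degree v with hSB
  have habn : a + b = n := by
    have h := A.card_add_card_compl
    simp only [Fintype.card_fin] at h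
    rw [ha, hb, hB]; exact h
  have hS : SA + SB = ∑ v, G.degree v := A.sum_add_sum_compl _
  have h1 : 4 * SA + a ≤ a * n := by
    calc 4 * SA + a = ∑ v ∈ A, (4 * G.degree v + 1) := by
          rw [Finset.sum_add_distrib, Finset.mul_sum, Finset.sum_const, smul_eq_mul, mul_one]
      _ ≤ ∑ _v ∈ A, n := Finset.sum_le_sum hA
      _ = a * n := by rw [Finset.sum_const, smul_eq_mul]
  -- key double counting inequality : SB ≤ b*(b-1) + SA
  have hsplit : ∀ v, G.degree v =
      ((G.neighborFinset v).filter (· ∈ A)).card +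
      ((G.neighborFinset v).filter (· ∈ B)).card := by
    intro v
    have h := Finset.card_filter_add_card_filter_not (s := G.neighborFinset v)
      (p := (· ∈ A))
    rw [SimpleGraph.degree, ← h]
    congr 2
    ext x
    simp [hB]
  have hBB : ∀ v ∈ B, ((G.neighborFinset v).filter (· ∈ B)).card ≤ b - 1 := by
    intro v hv
    have hsub : (G.neighborFinset v).filter (· ∈ B) ⊆ B.erase v := by
      intro x hx
      simp only [Finset.mem_filter, SimpleGraph.mem_neighborFinset] at hx
      refine Finset.mem_erase.2 ⟨fun h => ?_, hx.2⟩
      exact G.loopless.irrefl v (h ▸ hx.1)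
    calc ((G.neighborFinset v).filter (· ∈ B)).card ≤ (B.erase v).card :=
          Finset.card_le_card hsub
      _ = b - 1 := by rw [Finset.card_erase_of_mem hv]
  have hswap : ∑ v ∈ B, ((G.neighborFinset v).filter (· ∈ A)).card
      = ∑ w ∈ A, ((G.neighborFinset w).filter (· ∈ B)).card := by
    have : ∀ (s t : Finset (Fin n)),
        ∑ v ∈ s, ((G.neighborFinset v).filter (· ∈ t)).card
        = ∑ v ∈ s, ∑ w ∈ t, (if G.Adj v w then 1 else 0) := by
      intro s t
      refine Finset.sum_congr rfl fun v _ => ?_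
      rw [show (G.neighborFinset v).filter (· ∈ t) = t.filter (G.Adj v ·) by
        ext x; simp [SimpleGraph.mem_neighborFinset, and_comm]]
      rw [Finset.card_filter]
    rw [this, this, Finset.sum_comm]
    refine Finset.sum_congr rfl fun v _ => Finset.sum_congr rfl fun w _ => ?_
    simp [G.adj_comm]
  have hAB : ∑ w ∈ A, ((G.neighborFinset w).filter (· ∈ B)).card ≤ SA := by
    refine Finset.sum_le_sum fun w _ => ?_
    exact le_trans (Finset.card_le_card (Finset.filter_subset _ _)) (le_refl _)
  have h3 : SB ≤ b * (b - 1) + SA := by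
    calc SB = ∑ v ∈ B, (((G.neighborFinset v).filter (· ∈ A)).card +
            ((G.neighborFinset v).filter (· ∈ B)).card) :=
          Finset.sum_congr rfl fun v _ => hsplit v
      _ = ∑ v ∈ B, ((G.neighborFinset v).filter (· ∈ A)).card +
          ∑ v ∈ B, ((G.neighborFinset v).filter (· ∈ B)).card := Finset.sum_add_distrib
      _ ≤ SA + ∑ _v ∈ B, (b - 1) := by
          refine Nat.add_le_add ?_ (Finset.sum_le_sum hBB)
          rw [hswap]; exact hAB
      _ = SA + b * (b - 1) := by rw [Finset.sum_const, smul_eq_mul]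
      _ = b * (b - 1) + SA := by ring
  -- arithmetic
  rcases Nat.eq_zero_or_pos b with hb0 | hbpos
  · exfalso
    have hBempty : B = ∅ := Finset.card_eq_zero.mp hb0
    have hSB0 : SB = 0 := by rw [hSB, hBempty, Finset.sum_empty]
    have han : a = n := by omega
    rw [← hS, hSB0, Nat.add_zero] at hsum
    rw [han] at h1
    zify [show 1 ≤ n by omega] at hsum h1
    have hnn : (2:ℤ) ≤ n := by exact_mod_cast hn
    nlinarith [hsum, h1, hnn]
  · -- cast to ℤ
    zify at h1 h3 hsum hS ⊢
    have hn1 : (1:ℤ) ≤ b := by exact_mod_cast hbpos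
    have hab : (a:ℤ) + b = n := by exact_mod_cast habn
    have hnn : (2:ℤ) ≤ n := by exact_mod_cast hn
    have hsub : ((n:ℤ) - 1) = ((n - 1 : ℕ) : ℤ) := by
      have : 1 ≤ n := by omega
      push_cast [Nat.cast_sub this]; ring
    have hsub2 : ((b:ℤ) - 1) = ((b - 1 : ℕ) : ℤ) := by
      have : 1 ≤ b := hbpos
      push_cast [Nat.cast_sub this]; ring
    rw [← hsub] at hsum
    rw [← hsub2] at h3
    by_contra hcon
    push_neg at hcon
    nlinarith [h1, h3, hsum, hS, hn1, hab, hnn, hcon, mul_le_mul_of_nonneg_left (le_of_lt hcon) (by linarith : (0:ℤ) ≤ 2 * b)]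

theorem stmt_1 (n : ℕ) (hn : 2 ≤ n) (G : SimpleGraph (Fin n)) [DecidableRel G.Adj]
    (hedges : 2 * G.edgeFinset.card = n.choose 2) :
    ∃ u : Fin n, (n : ℝ)/4 ≤ G.degree u ∧ (G.degree u : ℝ) ≤ 3*n/4 - 1 := by
  classical
  by_contra hcon
  push_neg at hcon
  have hdeglt : ∀ v : Fin n, G.degree v ≤ n - 1 := fun v => by
    have := G.degree_lt_card_verts v
    simp only [Fintype.card_fin] at this
    omega
  -- sum of degrees
  have hchoose : 2 * n.choose 2 = n * (n - 1) := by
    rw [Nat.choose_two_right]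
    have he : 2 ∣ n * (n - 1) := by
      rcases Nat.even_or_odd n with h | h
      · exact Dvd.dvd.mul_right h.two_dvd _
      · exact Dvd.dvd.mul_left (Nat.Odd.sub_odd h odd_one).two_dvd _
    omega
  have hsumG : 2 * ∑ v, G.degree v = n * (n - 1) := by
    rw [G.sum_degrees_eq_twice_card_edges]
    omega
  -- the low-degree set
  set A : Finset (Fin n) := Finset.univ.filter (fun v => 4 * G.degree v + 1 ≤ n) with hA
  have hAlow : ∀ v ∈ A, 4 * G.degree v + 1 ≤ n := fun v hv => (Finset.mem_filter.mp hv).2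
  have hBhigh : ∀ v ∈ Aᶜ, 3 * (n - 1) ≤ 4 * G.degree v := by
    intro v hv
    have h1 : ¬ (4 * G.degree v + 1 ≤ n) := by
      intro h
      exact (Finset.mem_compl.mp hv) (Finset.mem_filter.mpr ⟨Finset.mem_univ v, h⟩)
    have hge : (n : ℝ)/4 ≤ G.degree v := by
      have : n ≤ 4 * G.degree v := by omega
      have : (n : ℝ) ≤ 4 * G.degree v := by exact_mod_cast this
      linarith
    have := hcon v hge
    have h2 : (3 * n : ℝ) - 4 < 4 * G.degree v := by push_cast at this ⊢; linarith
    have h3 : 3 * n < 4 * G.degree v + 4 := by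
      exact_mod_cast (by linarith : (3*(n:ℝ)) < 4 * (G.degree v:ℝ) + 4)
    omega
  -- apply key lemma to G with A : n + 1 ≤ 2 * Aᶜ.card
  have key1 := aux_key n hn G A hAlow hsumG
  -- now the complement graph
  have hdegc : ∀ v, Gᶜ.degree v = n - 1 - G.degree v := by
    intro v
    rw [SimpleGraph.degree_compl, Fintype.card_fin]
  have hsumGc : 2 * ∑ v, Gᶜ.degree v = n * (n - 1) := by
    have : ∑ v, (Gᶜ.degree v + G.degree v) = ∑ _v : Fin n, (n - 1) := by
      refine Finset.sum_congr rfl fun v _ => ?_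
      rw [hdegc v]
      have := hdeglt v
      omega
    rw [Finset.sum_add_distrib] at this
    simp only [Finset.sum_const, Finset.card_univ, Fintype.card_fin, smul_eq_mul] at this
    omega
  have hAclow : ∀ v ∈ Aᶜ, 4 * Gᶜ.degree v + 1 ≤ n := by
    intro v hv
    have h1 := hBhigh v hv
    have h2 := hdeglt v
    rw [hdegc v]
    omega
  have key2 := aux_key n hn Gᶜ Aᶜ hAclow hsumGc
  rw [compl_compl] at key2
  have := A.card_add_card_compl
  simp only [Fintype.card_fin] at this
  omega
end

section
/- If c : E(K_n) → {-1,1} is an edge labeling of the complete graph K_n with n ≥ 2 such that the sum of all edge labels is 0, then there exists a vertex v such that the absolute value of the sum of the labels of the n-1 edges incident with v is at most n/2 - 1. -/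
open Finset

private lemma dc_stmt2 (n : ℕ) (f : Sym2 (Fin n) → ℤ) :
    ∑ v : Fin n, ∑ u ∈ Finset.univ.filter (fun u => u ≠ v), f s(v, u)
      = 2 * ∑ e ∈ (⊤ : SimpleGraph (Fin n)).edgeFinset, f e := by
  classical
  have hA : ∑ v : Fin n, ∑ u ∈ Finset.univ.filter (fun u => u ≠ v), f s(v, u)
      = ∑ p ∈ (Finset.univ : Finset (Fin n)).offDiag, f (Sym2.mk.uncurry p) := by
    rw [show (Finset.univ : Finset (Fin n)).offDiag = (Finset.univ ×ˢ Finset.univ).filter (fun a : Fin n × Fin n => a.1 ≠ a.2) by ext; simp, Finset.sum_filter, Finset.sum_product]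
    refine Finset.sum_congr rfl fun v _ => ?_
    rw [Finset.sum_filter]
    refine Finset.sum_congr rfl fun u _ => ?_
    simp [ne_comm]
  have himg : (Finset.univ : Finset (Fin n)).offDiag.image Sym2.mk.uncurry
      = (⊤ : SimpleGraph (Fin n)).edgeFinset := by
    ext e
    induction e using Sym2.ind with
    | _ x y =>
      simp only [Finset.mem_image, SimpleGraph.mem_edgeFinset, SimpleGraph.mem_edgeSet,
        SimpleGraph.top_adj, Finset.mem_offDiag, Finset.mem_univ, true_and]
      constructor
      · rintro ⟨⟨a, b⟩, hab, h⟩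
        rcases Sym2.eq.1 h with ⟨h1, h2⟩ | ⟨h1, h2⟩ <;>
          first | exact hab | exact hab.symm
      · intro h
        exact ⟨(x, y), h, rfl⟩
  have hfib : ∀ e ∈ (Finset.univ : Finset (Fin n)).offDiag.image Sym2.mk.uncurry,
      #{z ∈ (Finset.univ : Finset (Fin n)).offDiag | Sym2.mk.uncurry z = e} = 2 := by
    intro e he
    induction e using Sym2.ind with
    | _ x y =>
      simp only [Finset.mem_image, Finset.mem_offDiag, Finset.mem_univ, true_and] at he
      obtain ⟨⟨a, b⟩, hab, h⟩ := he
      have hxy : x ≠ y := by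
        rcases Sym2.eq.1 h with ⟨h1, h2⟩ | ⟨h1, h2⟩ <;>
          first | exact hab | exact hab.symm
      have hset : {z ∈ (Finset.univ : Finset (Fin n)).offDiag | Sym2.mk.uncurry z = s(x, y)}
          = {(x, y), (y, x)} := by
        ext ⟨a', b'⟩
        simp only [Finset.mem_filter, Finset.mem_offDiag, Finset.mem_univ, true_and,
          Finset.mem_insert, Finset.mem_singleton, Sym2.eq_iff, Prod.mk.injEq, Function.uncurry_apply_pair]
        constructor
        · rintro ⟨_, h⟩; exact h
        · rintro (⟨rfl, rfl⟩ | ⟨rfl, rfl⟩) <;> simp [hxy, hxy.symm]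
      rw [hset, Finset.card_insert_of_notMem (by simp [hxy, Prod.ext_iff]),
        Finset.card_singleton]
  rw [hA, Finset.sum_comp f Sym2.mk.uncurry]
  have h2 : ∑ b ∈ (Finset.univ : Finset (Fin n)).offDiag.image Sym2.mk.uncurry,
      #{a ∈ (Finset.univ : Finset (Fin n)).offDiag | Sym2.mk.uncurry a = b} • f b
      = ∑ b ∈ (Finset.univ : Finset (Fin n)).offDiag.image Sym2.mk.uncurry, 2 * f b := by
    refine Finset.sum_congr rfl fun e he => ?_
    rw [hfib e he]
    simp [two_mul]
  rw [h2, himg, ← Finset.mul_sum]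

private lemma inner_bound_stmt2 {n : ℕ} (c : Sym2 (Fin n) → ℤ)
    (hc1 : ∀ v u : Fin n, u ≠ v → |c s(v, u)| ≤ 1)
    (s : Finset (Fin n)) (v : Fin n) (hs : ∀ u ∈ s, u ≠ v) :
    |∑ u ∈ s, c s(v, u)| ≤ (s.card : ℤ) := by
  calc |∑ u ∈ s, c s(v, u)| ≤ ∑ u ∈ s, |c s(v, u)| := Finset.abs_sum_le_sum_abs _ _
    _ ≤ ∑ u ∈ s, 1 := Finset.sum_le_sum fun u hu => hc1 v u (hs u hu)
    _ = (s.card : ℤ) := by simp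

private lemma arith_stmt2 (p q n A : ℤ) (hn : 2 ≤ n) (hp0 : 0 ≤ p) (hq0 : 0 ≤ q)
    (hpq : p + q = n)
    (f1 : p * (n - 1) ≤ 2 * A) (f2 : q * (n - 1) ≤ 2 * A)
    (c1 : 2 * A ≤ p * (p - 1) + q * (q - 1))
    (c2 : A ≤ p * (p - 1) + p * q) (c3 : A ≤ q * (q - 1) + p * q) : False := by
  subst hpq
  rcases eq_or_lt_of_le hp0 with hpz | hpz
  · rw [← hpz] at f2 c2 hn
    nlinarith
  rcases eq_or_lt_of_le hq0 with hqz | hqz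
  · rw [← hqz] at f1 c3 hn
    nlinarith
  have e1 : q * (p - q + 1) ≤ 0 := by nlinarith
  have e2 : p * (q - p + 1) ≤ 0 := by nlinarith
  have e1' : p - q + 1 ≤ 0 := by nlinarith
  have e2' : q - p + 1 ≤ 0 := by nlinarith
  omega

theorem stmt_2 (n : ℕ) (hn : 2 ≤ n) (c : Sym2 (Fin n) → ℤ)
    (hc : ∀ e ∈ (⊤ : SimpleGraph (Fin n)).edgeSet, c e = 1 ∨ c e = -1)
    (hzero : ∑ e ∈ (⊤ : SimpleGraph (Fin n)).edgeFinset, c e = 0) :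
    ∃ v : Fin n,
      |(∑ u ∈ Finset.univ.filter (fun u => u ≠ v), c s(v, u) : ℤ)| ≤ (n : ℝ)/2 - 1 := by
  classical
  by_contra hcon
  push_neg at hcon
  set S : Fin n → ℤ := fun v => ∑ u ∈ Finset.univ.filter (fun u => u ≠ v), c s(v, u) with hSdef
  have hedge : ∀ v u : Fin n, u ≠ v → |c s(v, u)| ≤ 1 := by
    intro v u h
    rcases hc s(v, u) (by simp [SimpleGraph.mem_edgeSet]; exact h.symm) with h1 | h1 <;>
      simp [h1]
  -- integer form of the contradiction hypothesis
  have key : ∀ v : Fin n, (n : ℤ) - 1 ≤ 2 * |S v| := by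
    intro v
    have h : (n : ℝ) / 2 - 1 < ((|S v| : ℤ) : ℝ) := by
      simp only [hSdef]; exact hcon v
    have h3 : (n : ℝ) - 2 < 2 * ((|S v| : ℤ) : ℝ) := by linarith
    have h4 : (n : ℤ) - 2 < 2 * |S v| := by exact_mod_cast h3
    omega
  -- total sum is zero
  have hsum0 : ∑ v : Fin n, S v = 0 := by
    rw [hSdef]
    rw [dc_stmt2 n c, hzero]
    ring
  set P := Finset.univ.filter (fun v => 0 < S v) with hPdef
  set N := Finset.univ.filter (fun v => ¬ 0 < S v) with hNdef
  have hdisj : Disjoint P N := disjoint_filter_filter_not _ _ _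
  have hunion : P ∪ N = Finset.univ := filter_union_filter_not_eq _ _
  have hcard : P.card + N.card = n := by
    rw [← Finset.card_union_of_disjoint hdisj, hunion, Finset.card_univ, Fintype.card_fin]
  have htot : ∑ v ∈ P, S v + ∑ v ∈ N, S v = 0 := by
    rw [hPdef, hNdef, Finset.sum_filter_add_sum_filter_not, hsum0]
  set A := ∑ v ∈ P, S v with hAdef
  have hNA : ∑ v ∈ N, S v = -A := by omega
  -- lower bounds on 2A
  have f1 : (P.card : ℤ) * ((n : ℤ) - 1) ≤ 2 * A := by
    have : ∑ v ∈ P, ((n : ℤ) - 1) ≤ ∑ v ∈ P, 2 * S v := by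
      refine Finset.sum_le_sum fun v hv => ?_
      have hv' : 0 < S v := (Finset.mem_filter.1 hv).2
      have := key v
      rw [abs_of_pos hv'] at this
      omega
    rw [Finset.sum_const, nsmul_eq_mul, ← Finset.mul_sum] at this
    linarith
  have f2 : (N.card : ℤ) * ((n : ℤ) - 1) ≤ 2 * A := by
    have : ∑ v ∈ N, 2 * S v ≤ ∑ v ∈ N, (-((n : ℤ) - 1)) := by
      refine Finset.sum_le_sum fun v hv => ?_
      have hv' : ¬ 0 < S v := (Finset.mem_filter.1 hv).2
      have hv'' : S v ≤ 0 := by omega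
      have := key v
      rw [abs_of_nonpos hv''] at this
      omega
    rw [Finset.sum_const, nsmul_eq_mul, ← Finset.mul_sum, hNA] at this
    linarith
  -- splitting the star sums
  have hPne : ∀ v ∈ P, ∀ u ∈ N, u ≠ v := by
    intro v hv u hu
    rintro rfl
    exact (Finset.mem_filter.1 hu).2 (Finset.mem_filter.1 hv).2
  have hsplitP : ∀ v ∈ P, S v
      = (∑ u ∈ P.filter (fun u => u ≠ v), c s(v, u)) + ∑ u ∈ N, c s(v, u) := by
    intro v hv
    have h1 : Finset.univ.filter (fun u => u ≠ v)
        = P.filter (fun u => u ≠ v) ∪ N.filter (fun u => u ≠ v) := by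
      rw [← Finset.filter_union, hunion]
    have h2 : N.filter (fun u => u ≠ v) = N :=
      Finset.filter_true_of_mem (fun u hu => hPne v hv u hu)
    rw [hSdef]
    simp only
    rw [h1, Finset.sum_union (Finset.disjoint_filter_filter hdisj), h2]
  have hsplitN : ∀ v ∈ N, S v
      = (∑ u ∈ N.filter (fun u => u ≠ v), c s(v, u)) + ∑ u ∈ P, c s(v, u) := by
    intro v hv
    have h1 : Finset.univ.filter (fun u => u ≠ v)
        = N.filter (fun u => u ≠ v) ∪ P.filter (fun u => u ≠ v) := by
      rw [← Finset.filter_union, Finset.union_comm, hunion]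
    have h2 : P.filter (fun u => u ≠ v) = P :=
      Finset.filter_true_of_mem (fun u hu => by
        rintro rfl
        exact (Finset.mem_filter.1 hv).2 (Finset.mem_filter.1 hu).2)
    rw [hSdef]
    simp only
    rw [h1, Finset.sum_union (Finset.disjoint_filter_filter hdisj.symm), h2]
  set X := ∑ v ∈ P, ∑ u ∈ P.filter (fun u => u ≠ v), c s(v, u) with hXdef
  set Z := ∑ v ∈ N, ∑ u ∈ N.filter (fun u => u ≠ v), c s(v, u) with hZdef
  set Y := ∑ v ∈ P, ∑ u ∈ N, c s(v, u) with hYdef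
  have hAXY : A = X + Y := by
    rw [hAdef, hXdef, hYdef, ← Finset.sum_add_distrib]
    exact Finset.sum_congr rfl hsplitP
  have hYsym : (∑ v ∈ N, ∑ u ∈ P, c s(v, u)) = Y := by
    rw [hYdef, Finset.sum_comm]
    exact Finset.sum_congr rfl fun a _ => Finset.sum_congr rfl fun b _ => by
      rw [Sym2.eq_swap]
  have hBZY : -A = Z + Y := by
    rw [← hNA, hZdef, ← hYsym, ← Finset.sum_add_distrib]
    exact Finset.sum_congr rfl hsplitN
  -- bounds on X, Z, Y
  have hXb : |X| ≤ (P.card : ℤ) * ((P.card : ℤ) - 1) := by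
    calc |X| ≤ ∑ v ∈ P, |∑ u ∈ P.filter (fun u => u ≠ v), c s(v, u)| :=
          Finset.abs_sum_le_sum_abs _ _
      _ ≤ ∑ v ∈ P, ((P.card : ℤ) - 1) := by
          refine Finset.sum_le_sum fun v hv => ?_
          have hb := inner_bound_stmt2 c hedge (P.filter (fun u => u ≠ v)) v
            (fun u hu => (Finset.mem_filter.1 hu).2)
          have hcardf : (P.filter (fun u => u ≠ v)).card = P.card - 1 := by
            rw [Finset.filter_ne', Finset.card_erase_of_mem hv]
          have hpos : 1 ≤ P.card := Finset.card_pos.2 ⟨v, hv⟩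
          calc |∑ u ∈ P.filter (fun u => u ≠ v), c s(v, u)|
              ≤ ((P.filter (fun u => u ≠ v)).card : ℤ) := hb
            _ = (P.card : ℤ) - 1 := by rw [hcardf]; omega
      _ = (P.card : ℤ) * ((P.card : ℤ) - 1) := by
          rw [Finset.sum_const, nsmul_eq_mul]
  have hZb : |Z| ≤ (N.card : ℤ) * ((N.card : ℤ) - 1) := by
    calc |Z| ≤ ∑ v ∈ N, |∑ u ∈ N.filter (fun u => u ≠ v), c s(v, u)| :=
          Finset.abs_sum_le_sum_abs _ _
      _ ≤ ∑ v ∈ N, ((N.card : ℤ) - 1) := by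
          refine Finset.sum_le_sum fun v hv => ?_
          have hb := inner_bound_stmt2 c hedge (N.filter (fun u => u ≠ v)) v
            (fun u hu => (Finset.mem_filter.1 hu).2)
          have hcardf : (N.filter (fun u => u ≠ v)).card = N.card - 1 := by
            rw [Finset.filter_ne', Finset.card_erase_of_mem hv]
          have hpos : 1 ≤ N.card := Finset.card_pos.2 ⟨v, hv⟩
          calc |∑ u ∈ N.filter (fun u => u ≠ v), c s(v, u)|
              ≤ ((N.filter (fun u => u ≠ v)).card : ℤ) := hb
            _ = (N.card : ℤ) - 1 := by rw [hcardf]; omega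
      _ = (N.card : ℤ) * ((N.card : ℤ) - 1) := by
          rw [Finset.sum_const, nsmul_eq_mul]
  have hYb : |Y| ≤ (P.card : ℤ) * (N.card : ℤ) := by
    calc |Y| ≤ ∑ v ∈ P, |∑ u ∈ N, c s(v, u)| := Finset.abs_sum_le_sum_abs _ _
      _ ≤ ∑ v ∈ P, (N.card : ℤ) := by
          refine Finset.sum_le_sum fun v hv => ?_
          exact inner_bound_stmt2 c hedge N v (fun u hu => hPne v hv u hu)
      _ = (P.card : ℤ) * (N.card : ℤ) := by rw [Finset.sum_const, nsmul_eq_mul]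
  -- final arithmetic
  set p := (P.card : ℤ) with hp
  set q := (N.card : ℤ) with hq
  have hpq : p + q = (n : ℤ) := by rw [hp, hq]; exact_mod_cast hcard
  have hn' : (2 : ℤ) ≤ (n : ℤ) := by exact_mod_cast hn
  have hp0 : 0 ≤ p := Int.natCast_nonneg _
  have hq0 : 0 ≤ q := Int.natCast_nonneg _
  have hXb1 : X ≤ p * (p - 1) := le_trans (le_abs_self X) hXb
  have hXb2 : -(p * (p - 1)) ≤ X := by
    have := neg_abs_le X; linarith [hXb]
  have hZb1 : Z ≤ q * (q - 1) := le_trans (le_abs_self Z) hZb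
  have hZb2 : -(q * (q - 1)) ≤ Z := by
    have := neg_abs_le Z; linarith [hZb]
  have hYb1 : Y ≤ p * q := le_trans (le_abs_self Y) hYb
  have hYb2 : -(p * q) ≤ Y := by
    have := neg_abs_le Y; linarith [hYb]
  -- 2A = X - Z
  have h2A : 2 * A = X - Z := by linarith [hAXY, hBZY]
  have c1 : 2 * A ≤ p * (p - 1) + q * (q - 1) := by linarith
  have c2 : A ≤ p * (p - 1) + p * q := by linarith [hAXY]
  have c3 : A ≤ q * (q - 1) + p * q := by linarith [hBZY]
  exact arith_stmt2 p q n A hn' hp0 hq0 hpq f1 f2 c1 c2 c3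
end

section
/- Let n be a multiple of 4 and let K_n have vertex set {u_i : i ∈ I} ∪ {v_i : i ∈ I} where I = {1,...,n/2}. Define c : E(K_n) → {-1,1} by c(e) = 1 exactly when e = u_i v_j with i+j even, or e = u_i u_j with i ≠ j, and c(e) = -1 otherwise. Then c is zero-sum, and for every vertex w of K_n, the absolute value of the sum of the labels of the edges incident with w equals n/2 - 1. -/
open Finset

lemma aux_parity_sum (m k : ℕ) (hm : Even m) :
    ∑ j : Fin m, (if Even (k + (j : ℕ)) then (1 : ℤ) else -1) = 0 := by
  have h1 : ∀ j : ℕ, (if Even (k + j) then (1 : ℤ) else -1) = (-1) ^ (k + j) := by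
    intro j
    by_cases h : Even (k + j)
    · rw [if_pos h, h.neg_one_pow]
    · rw [if_neg h, (Nat.not_even_iff_odd.mp h).neg_one_pow]
  simp_rw [h1, pow_add, ← Finset.mul_sum]
  have h2 : ∑ j : Fin m, (-1 : ℤ) ^ (j : ℕ) = 0 := by
    rw [Fin.sum_univ_eq_sum_range (fun j => (-1 : ℤ) ^ j), neg_one_geom_sum, if_pos hm]
  rw [h2, mul_zero]

lemma aux_double_count {V : Type*} [Fintype V] [DecidableEq V] (f : Sym2 V → ℤ) :
    ∑ w : V, ∑ x ∈ Finset.univ.filter (fun x => x ≠ w), f s(w, x)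
      = 2 * ∑ e ∈ (⊤ : SimpleGraph V).edgeFinset, f e := by
  have hL : ∑ w : V, ∑ x ∈ Finset.univ.filter (fun x => x ≠ w), f s(w, x)
      = ∑ p ∈ (Finset.univ : Finset V).offDiag, f (Sym2.mk.uncurry p) := by
    have hset : (Finset.univ : Finset V).offDiag
        = (Finset.univ ×ˢ Finset.univ).filter (fun p : V × V => p.2 ≠ p.1) := by
      ext p
      simp [Finset.mem_offDiag, ne_comm]
    rw [hset, Finset.sum_filter, Finset.sum_product]
    simp_rw [Finset.sum_filter, Function.uncurry_apply_pair]
  rw [hL, Finset.sum_comp f Sym2.mk.uncurry]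
  have himg : (Finset.univ : Finset V).offDiag.image Sym2.mk.uncurry
      = (⊤ : SimpleGraph V).edgeFinset := by
    ext e
    induction e with
    | _ a b =>
      simp only [Finset.mem_image, Finset.mem_offDiag, Finset.mem_univ, true_and,
        SimpleGraph.mem_edgeFinset, SimpleGraph.edgeSet_top, Set.mem_setOf_eq,
        Sym2.isDiag_iff_proj_eq]
      constructor
      · rintro ⟨⟨x, y⟩, hxy, he⟩
        have he := (Sym2.mk_eq_mk_iff (p := (x, y)) (q := (a, b))).mp he
        rcases he with h | h
        · simp only [Prod.mk.injEq] at h; rcases h with ⟨rfl, rfl⟩; exact hxy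
        · simp only [Prod.swap_prod_mk, Prod.mk.injEq] at h
          rcases h with ⟨rfl, rfl⟩; exact Ne.symm hxy
      · intro hab
        exact ⟨(a, b), hab, rfl⟩
  have hfib : ∀ e ∈ (Finset.univ : Finset V).offDiag.image Sym2.mk.uncurry,
      ((Finset.univ : Finset V).offDiag.filter (fun p => Sym2.mk.uncurry p = e)).card = 2 := by
    intro e he
    rw [himg] at he
    induction e with
    | _ a b =>
      have hab : a ≠ b := by
        simpa [SimpleGraph.edgeSet_top, Sym2.isDiag_iff_proj_eq] using he
      have : ((Finset.univ : Finset V).offDiag.filter (fun p => Sym2.mk.uncurry p = s(a, b)))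
          = {(a, b), (b, a)} := by
        ext ⟨x, y⟩
        simp only [Finset.mem_filter, Finset.mem_offDiag, Finset.mem_univ, true_and,
          Finset.mem_insert, Finset.mem_singleton, Function.uncurry_apply_pair, Sym2.eq_iff, Prod.mk.injEq,
          Prod.swap_prod_mk]
        constructor
        · rintro ⟨hxy, h | h⟩
          · left; exact ⟨h.1, h.2⟩
          · right; exact ⟨h.1, h.2⟩
        · rintro (⟨rfl, rfl⟩ | ⟨rfl, rfl⟩)
          · exact ⟨hab, Or.inl ⟨rfl, rfl⟩⟩
          · exact ⟨Ne.symm hab, Or.inr ⟨rfl, rfl⟩⟩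
      rw [this, Finset.card_insert_of_notMem, Finset.card_singleton]
      simp only [Finset.mem_singleton, Prod.mk.injEq, not_and]
      intro h; exact absurd h hab
  rw [Finset.sum_congr rfl (fun e he => by rw [hfib e he]), himg]
  simp [Finset.mul_sum, two_smul, two_mul]

theorem stmt_3 (n : ℕ) (hn : 4 ∣ n) (hn0 : 0 < n)
    (c : Sym2 (Fin (n/2) ⊕ Fin (n/2)) → ℤ)
    (huv : ∀ i j : Fin (n/2), c s(Sum.inl i, Sum.inr j) =
      if Even (((i : ℕ) + 1) + ((j : ℕ) + 1)) then 1 else -1)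
    (huu : ∀ i j : Fin (n/2), i ≠ j → c s(Sum.inl i, Sum.inl j) = 1)
    (hvv : ∀ i j : Fin (n/2), i ≠ j → c s(Sum.inr i, Sum.inr j) = -1) :
    (∑ e ∈ (⊤ : SimpleGraph (Fin (n/2) ⊕ Fin (n/2))).edgeFinset, c e = 0) ∧
    (∀ w : Fin (n/2) ⊕ Fin (n/2),
      |∑ x ∈ Finset.univ.filter (fun x => x ≠ w), c s(w, x)| = (n : ℤ)/2 - 1) := by
  have hmEven : Even (n / 2) := by
    obtain ⟨k, rfl⟩ := hn
    exact ⟨k, by omega⟩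
  have hm1 : 1 ≤ n / 2 := by omega
  have hcast : ((n : ℤ)) / 2 = ((n / 2 : ℕ) : ℤ) := by
    obtain ⟨k, rfl⟩ := hn
    push_cast
    omega
  -- cross sums are zero
  have crossL : ∀ i : Fin (n/2), ∑ j : Fin (n/2), c s(Sum.inl i, Sum.inr j) = 0 := by
    intro i
    have h1 : ∀ j : Fin (n/2), c s(Sum.inl i, Sum.inr j)
        = if Even ((i : ℕ) + (j : ℕ)) then (1 : ℤ) else -1 := by
      intro j
      rw [huv]
      congr 1
      rw [show (i : ℕ) + 1 + ((j : ℕ) + 1) = (i : ℕ) + (j : ℕ) + 2 by omega]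
      simp [Nat.even_add_one, parity_simps]
    rw [Finset.sum_congr rfl (fun j _ => h1 j)]
    exact aux_parity_sum _ _ hmEven
  have crossR : ∀ i : Fin (n/2), ∑ j : Fin (n/2), c s(Sum.inr i, Sum.inl j) = 0 := by
    intro i
    have h1 : ∀ j : Fin (n/2), c s(Sum.inr i, Sum.inl j)
        = if Even ((i : ℕ) + (j : ℕ)) then (1 : ℤ) else -1 := by
      intro j
      rw [Sym2.eq_swap, huv]
      congr 1
      rw [show (j : ℕ) + 1 + ((i : ℕ) + 1) = (i : ℕ) + (j : ℕ) + 2 by omega]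
      simp [Nat.even_add_one, parity_simps]
    rw [Finset.sum_congr rfl (fun j _ => h1 j)]
    exact aux_parity_sum _ _ hmEven
  -- star sums
  have star : ∀ w : Fin (n/2) ⊕ Fin (n/2),
      ∑ x ∈ Finset.univ.filter (fun x => x ≠ w), c s(w, x)
        = Sum.elim (fun _ => ((n/2 : ℕ) : ℤ) - 1) (fun _ => 1 - ((n/2 : ℕ) : ℤ)) w := by
    intro w
    rw [Finset.sum_filter, Fintype.sum_sum_type]
    cases w with
    | inl i =>
      have hA : ∑ j : Fin (n/2),
          (if (Sum.inl j : Fin (n/2) ⊕ Fin (n/2)) ≠ Sum.inl i then c s(Sum.inl i, Sum.inl j) else 0)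
          = ((n/2 : ℕ) : ℤ) - 1 := by
        have h1 : ∀ j : Fin (n/2),
            (if (Sum.inl j : Fin (n/2) ⊕ Fin (n/2)) ≠ Sum.inl i
              then c s(Sum.inl i, Sum.inl j) else 0)
            = 1 - (if j = i then (1 : ℤ) else 0) := by
          intro j
          by_cases h : j = i
          · subst h; simp
          · rw [if_pos (by simpa using h), huu i j (Ne.symm h), if_neg h, sub_zero]
        rw [Finset.sum_congr rfl (fun j _ => h1 j), Finset.sum_sub_distrib]
        rw [Finset.sum_ite_eq' Finset.univ i (fun _ => (1 : ℤ))]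
        simp
      have hB : ∑ j : Fin (n/2),
          (if (Sum.inr j : Fin (n/2) ⊕ Fin (n/2)) ≠ Sum.inl i then c s(Sum.inl i, Sum.inr j) else 0)
          = 0 := by
        have : ∀ j : Fin (n/2), (if (Sum.inr j : Fin (n/2) ⊕ Fin (n/2)) ≠ Sum.inl i
            then c s(Sum.inl i, Sum.inr j) else 0) = c s(Sum.inl i, Sum.inr j) := by
          intro j; rw [if_pos (by simp)]
        rw [Finset.sum_congr rfl (fun j _ => this j)]
        exact crossL i
      rw [hA, hB]
      simp
    | inr i =>
      have hA : ∑ j : Fin (n/2),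
          (if (Sum.inl j : Fin (n/2) ⊕ Fin (n/2)) ≠ Sum.inr i then c s(Sum.inr i, Sum.inl j) else 0)
          = 0 := by
        have : ∀ j : Fin (n/2), (if (Sum.inl j : Fin (n/2) ⊕ Fin (n/2)) ≠ Sum.inr i
            then c s(Sum.inr i, Sum.inl j) else 0) = c s(Sum.inr i, Sum.inl j) := by
          intro j; rw [if_pos (by simp)]
        rw [Finset.sum_congr rfl (fun j _ => this j)]
        exact crossR i
      have hB : ∑ j : Fin (n/2),
          (if (Sum.inr j : Fin (n/2) ⊕ Fin (n/2)) ≠ Sum.inr i then c s(Sum.inr i, Sum.inr j) else 0)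
          = 1 - ((n/2 : ℕ) : ℤ) := by
        have h1 : ∀ j : Fin (n/2),
            (if (Sum.inr j : Fin (n/2) ⊕ Fin (n/2)) ≠ Sum.inr i
              then c s(Sum.inr i, Sum.inr j) else 0)
            = (if j = i then (0 : ℤ) else 0) - 1 + (if j = i then (1 : ℤ) else 0) := by
          intro j
          by_cases h : j = i
          · subst h; simp
          · rw [if_pos (by simpa using h), hvv i j (Ne.symm h), if_neg h, if_neg h]
            ring
        rw [Finset.sum_congr rfl (fun j _ => h1 j)]
        rw [Finset.sum_add_distrib, Finset.sum_sub_distrib]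
        rw [Finset.sum_ite_eq' Finset.univ i (fun _ => (1 : ℤ)),
          Finset.sum_ite_eq' Finset.univ i (fun _ => (0 : ℤ))]
        simp
        ring
      rw [hA, hB]
      simp
  constructor
  · have hdc := aux_double_count c
    rw [Finset.sum_congr rfl (fun w _ => star w)] at hdc
    rw [Fintype.sum_sum_type] at hdc
    simp only [Sum.elim_inl, Sum.elim_inr, Finset.sum_const, Finset.card_univ,
      Fintype.card_fin, nsmul_eq_mul] at hdc
    have : (0 : ℤ) = 2 * ∑ e ∈ (⊤ : SimpleGraph (Fin (n/2) ⊕ Fin (n/2))).edgeFinset, c e := by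
      rw [← hdc]; ring
    omega
  · intro w
    rw [star w, hcast]
    cases w with
    | inl i =>
      simp only [Sum.elim_inl]
      rw [abs_of_nonneg]
      have : (1 : ℤ) ≤ ((n/2 : ℕ) : ℤ) := by exact_mod_cast hm1
      omega
    | inr i =>
      simp only [Sum.elim_inr]
      have : (1 : ℤ) ≤ ((n/2 : ℕ) : ℤ) := by exact_mod_cast hm1
      rw [abs_of_nonpos (by omega)]
      ring
end

section
/- If c : E(K_n) → {-1,1} is a zero-sum labeling of K_n and F is a spanning forest of K_n, then there exists an isomorphic copy F' of F in K_n with |sum of c over E(F')| ≤ Δ(F) + 1. -/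
open Finset
open scoped Classical

lemma filter_congr_inst {α : Type*} {p : α → Prop} {h1 h2 : DecidablePred p} {s : Finset α} :
    @Finset.filter α p h1 s = @Finset.filter α p h2 s := by
  rw [Subsingleton.elim h1 h2]

lemma aux_low_degree {n : ℕ} (F : SimpleGraph (Fin n)) [DecidableRel F.Adj]
    (hF : F.IsAcyclic) (hn : 0 < n) : ∃ v : Fin n, F.degree v ≤ 1 := by
  by_contra h
  push_neg at h
  have key : ∀ k : ℕ, ∃ (u v : Fin n) (p : F.Walk u v), p.IsPath ∧ p.length = k := by
    intro k
    induction k with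
    | zero => exact ⟨⟨0, hn⟩, ⟨0, hn⟩, SimpleGraph.Walk.nil, by simp, rfl⟩
    | succ k ih =>
      obtain ⟨u, v, p, hp, hlen⟩ := ih
      cases p with
      | nil =>
        have hk : k = 0 := by simpa using hlen.symm
        subst hk
        have hcard : 0 < (F.neighborFinset u).card := by
          rw [F.card_neighborFinset_eq_degree]
          have := h u; omega
        obtain ⟨x, hx⟩ := Finset.card_pos.mp hcard
        rw [SimpleGraph.mem_neighborFinset] at hx
        exact ⟨x, u, SimpleGraph.Walk.cons hx.symm SimpleGraph.Walk.nil,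
          by simp [hx.ne'], by simp⟩
      | cons h' p'' =>
        rename_i b
        have hcard : 1 < (F.neighborFinset u).card := by
          rw [F.card_neighborFinset_eq_degree]; exact h u
        obtain ⟨x, hx, hxb⟩ := Finset.exists_mem_ne hcard b
        rw [SimpleGraph.mem_neighborFinset] at hx
        have hpath := (SimpleGraph.Walk.cons_isPath_iff _ _).mp hp
        have hedge : s(u, x) ∉ (SimpleGraph.Walk.cons h' p'').edges := by
          intro hmem
          rw [SimpleGraph.Walk.edges_cons, List.mem_cons] at hmem
          rcases hmem with heq | hmem
          · rw [Sym2.eq_iff] at heq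
            rcases heq with ⟨-, h2⟩ | ⟨h1, -⟩
            · exact hxb h2
            · exact h'.ne h1
          · exact hpath.2 (SimpleGraph.Walk.fst_mem_support_of_mem_edges _ hmem)
        have hsupp : x ∉ (SimpleGraph.Walk.cons h' p'').support := by
          intro hxs
          have ht : ((SimpleGraph.Walk.cons h' p'').takeUntil x hxs).IsPath :=
            hp.takeUntil hxs
          have huniq := hF.path_unique ⟨_, ht⟩ (SimpleGraph.Path.singleton hx)
          apply hedge
          apply SimpleGraph.Walk.edges_takeUntil_subset _ hxs
          have : ((SimpleGraph.Walk.cons h' p'').takeUntil x hxs)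
              = (SimpleGraph.Path.singleton hx : F.Walk u x) := congrArg Subtype.val huniq
          rw [this]
          exact SimpleGraph.Path.mk'_mem_edges_singleton hx
        refine ⟨x, v, SimpleGraph.Walk.cons hx.symm _,
          (SimpleGraph.Walk.cons_isPath_iff _ _).mpr ⟨hp, hsupp⟩, by simp [hlen]⟩
  obtain ⟨u, v, p, hp, hlen⟩ := key n
  have h2 := hp.length_lt
  rw [hlen, Fintype.card_fin] at h2
  omega

theorem stmt_7 (n : ℕ) (c : Sym2 (Fin n) → ℤ)
    (hc : ∀ e ∈ (⊤ : SimpleGraph (Fin n)).edgeSet, c e = 1 ∨ c e = -1)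
    (hzero : ∑ e ∈ Finset.univ.filter (fun e => e ∈ (⊤ : SimpleGraph (Fin n)).edgeSet), c e = 0)
    (F : SimpleGraph (Fin n)) [DecidableRel F.Adj] (hF : F.IsAcyclic) :
    ∃ F' : SimpleGraph (Fin n), Nonempty (F ≃g F') ∧
      |∑ e ∈ Finset.univ.filter (fun e => e ∈ F'.edgeSet), c e| ≤ (F.maxDegree : ℤ) + 1 := by
  by_cases hE : ∃ a b : Fin n, F.Adj a b
  case neg =>
    push_neg at hE
    refine ⟨F, ⟨SimpleGraph.Iso.refl⟩, ?_⟩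
    have hempty : Finset.univ.filter (fun e => e ∈ F.edgeSet) = ∅ := by
      ext e
      induction e using Sym2.ind with
      | _ a b => simpa using hE a b
    rw [filter_congr_inst, hempty]
    simp
    positivity
  case pos =>
  obtain ⟨a₀, b₀, hab⟩ := hE
  have hn : 0 < n := Fin.pos a₀
  obtain ⟨v, hv⟩ := aux_low_degree F hF hn
  set EK : Finset (Sym2 (Fin n)) :=
    Finset.univ.filter (fun e => e ∈ (⊤ : SimpleGraph (Fin n)).edgeSet) with hEK
  set EF : Finset (Sym2 (Fin n)) :=
    Finset.univ.filter (fun e => e ∈ F.edgeSet) with hEF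
  have hFK : EF ⊆ EK := by
    intro e he
    simp only [hEK, hEF, Finset.mem_filter, Finset.mem_univ, true_and] at he ⊢
    exact SimpleGraph.edgeSet_mono le_top he
  -- preservation of non-diagonal edges under permutations
  have hpres : ∀ (g : Equiv.Perm (Fin n)) (e : Sym2 (Fin n)),
      e ∈ EK → Sym2.map ⇑g e ∈ EK := by
    intro g e he
    simp only [hEK, Finset.mem_filter, Finset.mem_univ, true_and,
      SimpleGraph.edgeSet_top, Set.mem_setOf_eq] at he ⊢
    rwa [Set.mem_compl_iff, Sym2.mem_diagSet, Sym2.isDiag_map g.injective]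
  set f : Equiv.Perm (Fin n) → ℤ := fun π => ∑ e ∈ EF, c (Sym2.map ⇑π e) with hf
  -- each permuted total sum is zero
  have hperm : ∀ π : Equiv.Perm (Fin n), ∑ e ∈ EK, c (Sym2.map ⇑π e) = 0 := by
    intro π
    rw [← hzero]
    refine Finset.sum_nbij' (fun e => Sym2.map ⇑π e) (fun e => Sym2.map ⇑π⁻¹ e)
      (fun e he => hpres π e he) (fun e he => hpres π⁻¹ e he) ?_ ?_ (fun e _ => rfl)
    · intro e _
      simp [Sym2.map_map, Function.comp_def, Equiv.Perm.inv_def, Equiv.symm_apply_apply]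
    · intro e _
      simp [Sym2.map_map, Function.comp_def, Equiv.Perm.inv_def, Equiv.apply_symm_apply]
  -- the sum over permutations of c(π e) doesn't depend on the edge e
  have hKconst : ∀ e ∈ EK, (∑ π : Equiv.Perm (Fin n), c (Sym2.map ⇑π e))
      = ∑ π : Equiv.Perm (Fin n), c (Sym2.map ⇑π s(a₀, b₀)) := by
    intro e he
    induction e using Sym2.ind with
    | _ x y =>
    have hxy : x ≠ y := by
      simp only [hEK, Finset.mem_filter, Finset.mem_univ, true_and,
        SimpleGraph.mem_edgeSet, SimpleGraph.top_adj] at he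
      exact he
    set σ : Equiv.Perm (Fin n) :=
      Equiv.swap (Equiv.swap a₀ x b₀) y * Equiv.swap a₀ x with hσ
    have hσa : σ a₀ = x := by
      have h1 : Equiv.swap a₀ x b₀ ≠ x := by
        intro hcontra
        rw [Equiv.swap_apply_eq_iff, Equiv.swap_apply_right] at hcontra
        exact hab.ne hcontra.symm
      simp only [hσ, Equiv.Perm.mul_apply, Equiv.swap_apply_left]
      exact Equiv.swap_apply_of_ne_of_ne h1.symm hxy
    have hσb : σ b₀ = y := by
      simp only [hσ, Equiv.Perm.mul_apply, Equiv.swap_apply_left]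
    refine Fintype.sum_equiv (Equiv.mulRight σ) _ _ ?_
    intro π
    simp only [Equiv.coe_mulRight, Equiv.Perm.coe_mul, ← Sym2.map_map,
      Sym2.map_pair_eq, Function.comp_apply, hσa, hσb]
  have he₀ : s(a₀, b₀) ∈ EF := by
    simp [hEF, SimpleGraph.mem_edgeSet, hab]
  have hK0 : ∑ π : Equiv.Perm (Fin n), c (Sym2.map ⇑π s(a₀, b₀)) = 0 := by
    have h1 : ∑ e ∈ EK, ∑ π : Equiv.Perm (Fin n), c (Sym2.map ⇑π e) = 0 := by
      rw [Finset.sum_comm]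
      simp only [hperm, Finset.sum_const_zero]
    have h2 : ∑ e ∈ EK, ∑ π : Equiv.Perm (Fin n), c (Sym2.map ⇑π e)
        = (EK.card : ℤ) * ∑ π : Equiv.Perm (Fin n), c (Sym2.map ⇑π s(a₀, b₀)) := by
      rw [Finset.sum_congr rfl hKconst, Finset.sum_const, nsmul_eq_mul]
    rw [h2] at h1
    have hcard : (EK.card : ℤ) ≠ 0 := by
      have : s(a₀, b₀) ∈ EK := hFK he₀
      have := Finset.card_pos.mpr ⟨_, this⟩
      exact_mod_cast this.ne'
    exact (mul_eq_zero.mp h1).resolve_left hcard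
  have hsum0 : ∑ π : Equiv.Perm (Fin n), f π = 0 := by
    simp only [hf]
    rw [Finset.sum_comm]
    rw [Finset.sum_congr rfl (fun e he => hKconst e (hFK he)), Finset.sum_const, hK0, smul_zero]
  -- step bound
  have hcE : ∀ e ∈ EK, c e = 1 ∨ c e = -1 := by
    intro e he
    simp only [hEK, Finset.mem_filter, Finset.mem_univ, true_and] at he
    exact hc e he
  have hstep : ∀ (π : Equiv.Perm (Fin n)) (x : Fin n),
      |f (π * Equiv.swap v x) - f π| ≤ 2 * ((F.maxDegree : ℤ) + 1) := by
    intro π x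
    set σ : Equiv.Perm (Fin n) := Equiv.swap v x with hσdef
    have hdiff : f (π * σ) - f π
        = ∑ e ∈ EF.filter (fun e => Sym2.map ⇑σ e ≠ e),
            (c (Sym2.map ⇑π (Sym2.map ⇑σ e)) - c (Sym2.map ⇑π e)) := by
      have h1 : f (π * σ) = ∑ e ∈ EF, c (Sym2.map ⇑π (Sym2.map ⇑σ e)) := by
        simp only [hf]
        refine Finset.sum_congr rfl fun e _ => ?_
        rw [Sym2.map_map, Equiv.Perm.coe_mul]
      have h2 : ∀ e ∈ EF,
          (c (Sym2.map ⇑π (Sym2.map ⇑σ e)) - c (Sym2.map ⇑π e)) ≠ 0 →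
          Sym2.map ⇑σ e ≠ e := by
        intro e _ hne hfix
        exact hne (by rw [hfix, sub_self])
      rw [h1, hf, ← Finset.sum_sub_distrib, ← Finset.sum_filter_of_ne h2]
    have hsub : EF.filter (fun e => Sym2.map ⇑σ e ≠ e)
        ⊆ F.incidenceFinset v ∪ F.incidenceFinset x := by
      intro e
      induction e using Sym2.ind with
      | _ a b =>
      intro he
      rw [Finset.mem_filter] at he
      obtain ⟨heF, hne⟩ := he
      have heF' : s(a, b) ∈ F.edgeFinset := by
        rw [SimpleGraph.mem_edgeFinset]
        simpa only [hEF, Finset.mem_filter, Finset.mem_univ, true_and] using heF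
      have hmem : v ∈ s(a, b) ∨ x ∈ s(a, b) := by
        by_contra hcon
        push_neg at hcon
        obtain ⟨hv1, hx1⟩ := hcon
        simp only [Sym2.mem_iff, not_or] at hv1 hx1
        apply hne
        rw [hσdef, Sym2.map_pair_eq,
          Equiv.swap_apply_of_ne_of_ne (Ne.symm hv1.1) (Ne.symm hx1.1),
          Equiv.swap_apply_of_ne_of_ne (Ne.symm hv1.2) (Ne.symm hx1.2)]
      rw [Finset.mem_union, SimpleGraph.incidenceFinset_eq_filter,
        SimpleGraph.incidenceFinset_eq_filter, Finset.mem_filter, Finset.mem_filter]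
      rcases hmem with hm | hm
      · exact Or.inl ⟨heF', hm⟩
      · exact Or.inr ⟨heF', hm⟩
    have hcard : (EF.filter (fun e => Sym2.map ⇑σ e ≠ e)).card ≤ F.maxDegree + 1 :=
      calc (EF.filter (fun e => Sym2.map ⇑σ e ≠ e)).card
          ≤ (F.incidenceFinset v ∪ F.incidenceFinset x).card := Finset.card_le_card hsub
        _ ≤ (F.incidenceFinset v).card + (F.incidenceFinset x).card := Finset.card_union_le _ _
        _ = F.degree v + F.degree x := by
            rw [SimpleGraph.card_incidenceFinset_eq_degree,
              SimpleGraph.card_incidenceFinset_eq_degree]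
        _ ≤ 1 + F.maxDegree := Nat.add_le_add hv (F.degree_le_maxDegree x)
        _ = F.maxDegree + 1 := Nat.add_comm _ _
    rw [hdiff]
    calc |∑ e ∈ EF.filter (fun e => Sym2.map ⇑σ e ≠ e),
            (c (Sym2.map ⇑π (Sym2.map ⇑σ e)) - c (Sym2.map ⇑π e))|
        ≤ ∑ e ∈ EF.filter (fun e => Sym2.map ⇑σ e ≠ e),
            |c (Sym2.map ⇑π (Sym2.map ⇑σ e)) - c (Sym2.map ⇑π e)| :=
          Finset.abs_sum_le_sum_abs _ _
      _ ≤ ∑ _e ∈ EF.filter (fun e => Sym2.map ⇑σ e ≠ e), (2 : ℤ) := by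
          refine Finset.sum_le_sum fun e he => ?_
          have heK : e ∈ EK := hFK (Finset.mem_of_mem_filter _ he)
          have hA := hcE _ (hpres π _ (hpres σ _ heK))
          have hB := hcE _ (hpres π _ heK)
          rcases hA with hA | hA <;> rcases hB with hB | hB <;> rw [hA, hB] <;> norm_num
      _ = 2 * ((EF.filter (fun e => Sym2.map ⇑σ e ≠ e)).card : ℤ) := by
          rw [Finset.sum_const, nsmul_eq_mul, mul_comm]
      _ ≤ 2 * ((F.maxDegree : ℤ) + 1) := by
          have : ((EF.filter (fun e => Sym2.map ⇑σ e ≠ e)).card : ℤ)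
              ≤ (F.maxDegree : ℤ) + 1 := by exact_mod_cast hcard
          linarith
  -- there are permutations with nonpositive and nonnegative value
  obtain ⟨πm, -, hπm⟩ : ∃ π ∈ (Finset.univ : Finset (Equiv.Perm (Fin n))), f π ≤ 0 := by
    apply Finset.exists_le_of_sum_le Finset.univ_nonempty
    rw [hsum0, Finset.sum_const_zero]
  obtain ⟨πp, -, hπp⟩ : ∃ π ∈ (Finset.univ : Finset (Equiv.Perm (Fin n))), (0 : ℤ) ≤ f π := by
    apply Finset.exists_le_of_sum_le Finset.univ_nonempty
    rw [hsum0, Finset.sum_const_zero]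
  -- star decomposition
  have hstar : ∀ ρ : Equiv.Perm (Fin n), ∃ l : List (Fin n),
      ρ = (l.map (fun x => Equiv.swap v x)).prod := by
    intro ρ
    refine Equiv.Perm.swap_induction_on ρ ⟨[], rfl⟩ ?_
    rintro g x y hxy ⟨l, hl⟩
    by_cases hx : x = v
    · subst hx
      exact ⟨y :: l, by simp only [List.map_cons, List.prod_cons, ← hl]⟩
    · by_cases hy : y = v
      · subst hy
        refine ⟨x :: l, ?_⟩
        simp only [List.map_cons, List.prod_cons, ← hl]
        rw [Equiv.swap_comm]
      · have h := Equiv.swap_mul_swap_mul_swap hxy hx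
        have h2 : Equiv.swap x y
            = (Equiv.swap y v)⁻¹ * Equiv.swap v x * (Equiv.swap y v)⁻¹ := by
          rw [← h]; group
        rw [Equiv.swap_inv] at h2
        refine ⟨y :: x :: y :: l, ?_⟩
        simp only [List.map_cons, List.prod_cons, ← hl]
        rw [h2, Equiv.swap_comm y v]
        simp only [mul_assoc]
  -- walk lemma
  have hwalk : ∀ l : List (Fin n), ∀ π : Equiv.Perm (Fin n), f π ≤ 0 →
      0 ≤ f (π * (l.map (fun x => Equiv.swap v x)).prod) →
      ∃ π' : Equiv.Perm (Fin n), |f π'| ≤ (F.maxDegree : ℤ) + 1 := by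
    intro l
    have hΔ : (0:ℤ) ≤ (F.maxDegree : ℤ) := Nat.cast_nonneg _
    induction l with
    | nil =>
      intro π h1 h2
      simp only [List.map_nil, List.prod_nil, mul_one] at h2
      exact ⟨π, by rw [abs_le]; constructor <;> linarith⟩
    | cons x l ih =>
      intro π h1 h2
      simp only [List.map_cons, List.prod_cons, ← mul_assoc] at h2
      by_cases h3 : f (π * Equiv.swap v x) ≤ 0
      · exact ih (π * Equiv.swap v x) h3 h2
      · push_neg at h3
        have hs := hstep π x
        rw [abs_le] at hs
        by_cases h4 : f (π * Equiv.swap v x) ≤ (F.maxDegree : ℤ) + 1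
        · exact ⟨π * Equiv.swap v x, by rw [abs_le]; constructor <;> linarith⟩
        · push_neg at h4
          exact ⟨π, by rw [abs_le]; constructor <;> linarith⟩
  obtain ⟨l, hl⟩ := hstar (πm⁻¹ * πp)
  obtain ⟨π', hπ'⟩ := hwalk l πm hπm (by rw [← hl, mul_inv_cancel_left]; exact hπp)
  refine ⟨F.map π'.toEmbedding, ⟨SimpleGraph.Iso.map (π' : Fin n ≃ Fin n) F⟩, ?_⟩
  have hval : ∑ e ∈ Finset.univ.filter (fun e => e ∈ (F.map π'.toEmbedding).edgeSet), c e
      = f π' := by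
    have himg : Finset.univ.filter (fun e => e ∈ (F.map π'.toEmbedding).edgeSet)
        = EF.image (Sym2.map ⇑π') := by
      ext e
      simp only [Finset.mem_filter, Finset.mem_univ, true_and, Finset.mem_image, hEF]
      constructor
      · intro he
        revert he
        induction e using Sym2.ind with
        | _ a b =>
        intro he
        rw [SimpleGraph.mem_edgeSet, SimpleGraph.map_adj] at he
        obtain ⟨u', v', huv, h1, h2⟩ := he
        refine ⟨s(u', v'), ?_, ?_⟩
        · simp only [Finset.mem_filter, Finset.mem_univ, true_and,
            SimpleGraph.mem_edgeSet]
          exact huv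
        · rw [Equiv.coe_toEmbedding] at h1 h2
          rw [Sym2.map_pair_eq, h1, h2]
      · rintro ⟨e', he', rfl⟩
        revert he'
        induction e' using Sym2.ind with
        | _ a b =>
        intro he'
        simp only [Finset.mem_filter, Finset.mem_univ, true_and,
          SimpleGraph.mem_edgeSet] at he'
        rw [Sym2.map_pair_eq, SimpleGraph.mem_edgeSet, SimpleGraph.map_adj]
        exact ⟨a, b, he', by rw [Equiv.coe_toEmbedding], by rw [Equiv.coe_toEmbedding]⟩
    rw [himg, Finset.sum_image (fun p _ q _ hpq => Sym2.map.injective π'.injective hpq), hf]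
  rw [filter_congr_inst, hval]
  exact hπ'
end

section
/- If c : E(K_n) → {-1,1} is a zero-sum labeling of K_n and F is a spanning forest of K_n with Δ(F) ≥ n/2 + 1, then there is an isomorphic copy F' of F in K_n with |c(E(F'))| ≤ n/2 - 1. -/
open Finset
open scoped Classical

lemma perm_of_card_eq {α : Type*} [Fintype α] [DecidableEq α] (A B : Finset α)
    (h : A.card = B.card) : ∃ σ : Equiv.Perm α, ∀ x, σ x ∈ B ↔ x ∈ A := by
  have h' : Aᶜ.card = Bᶜ.card := by simp [Finset.card_compl, h]
  let e1 : {x // x ∈ A} ≃ {x // x ∈ B} := Finset.equivOfCardEq h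
  let e2 : {x // ¬ x ∈ A} ≃ {x // ¬ x ∈ B} :=
    ((Equiv.subtypeEquivRight (q := fun x => x ∈ Aᶜ) (by simp)).trans
      (Finset.equivOfCardEq h')).trans (Equiv.subtypeEquivRight (by simp))
  refine ⟨((Equiv.sumCompl (· ∈ A)).symm.trans ((Equiv.sumCongr e1 e2).trans
      (Equiv.sumCompl (· ∈ B)))), ?_⟩
  intro x
  by_cases hx : x ∈ A
  · simp only [Equiv.trans_apply, Equiv.sumCompl_symm_apply_of_pos hx,
      Equiv.sumCongr_apply, Sum.map_inl, Equiv.sumCompl_apply_inl]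
    simpa [hx] using (e1 ⟨x, hx⟩).2
  · simp only [Equiv.trans_apply, Equiv.sumCompl_symm_apply_of_neg hx,
      Equiv.sumCongr_apply, Sum.map_inr, Equiv.sumCompl_apply_inr]
    simpa [hx] using (e2 ⟨x, hx⟩).2

lemma sum_pairs_eq_twice (n : ℕ) (f : Sym2 (Fin n) → ℤ) :
    ∑ u : Fin n, ∑ y ∈ univ.erase u, f s(u, y)
      = 2 * ∑ e ∈ univ.filter (fun e => e ∈ (⊤ : SimpleGraph (Fin n)).edgeSet), f e := by
  set t := univ.filter (fun e => e ∈ (⊤ : SimpleGraph (Fin n)).edgeSet) with ht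
  have step1 : ∑ u : Fin n, ∑ y ∈ univ.erase u, f s(u, y)
      = ∑ p ∈ univ.offDiag, f s(p.1, p.2) := by
    rw [(show (univ : Finset (Fin n)).offDiag = (univ ×ˢ univ).filter (fun a => a.1 ≠ a.2) from by ext; simp [Finset.mem_offDiag]), Finset.sum_filter, Finset.sum_product]
    refine Finset.sum_congr rfl fun u _ => ?_
    rw [← Finset.sum_filter]
    congr 1
    ext y
    simp [eq_comm, Finset.mem_erase, ne_eq]
  have maps : ∀ p ∈ univ.offDiag, s(p.1, p.2) ∈ t := by
    rintro ⟨a, b⟩ hp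
    simp only [Finset.mem_offDiag] at hp
    simp [ht, hp.2.2]
  have step2 := Finset.sum_fiberwise_of_maps_to maps (fun p => f s(p.1, p.2))
  rw [step1, ← step2, Finset.mul_sum]
  refine Finset.sum_congr rfl fun e he => ?_
  induction e with
  | _ a b =>
    have hab : a ≠ b := by
      simp only [ht, Finset.mem_filter] at he
      exact (SimpleGraph.mem_edgeSet _).mp he.2
    have hfil : univ.offDiag.filter (fun p : Fin n × Fin n => s(p.1, p.2) = s(a, b))
        = {(a, b), (b, a)} := by
      ext ⟨x, y⟩
      simp only [Finset.mem_filter, Finset.mem_offDiag, Finset.mem_univ, true_and,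
        Finset.mem_insert, Finset.mem_singleton, Sym2.eq_iff, Prod.mk.injEq]
      constructor
      · rintro ⟨hxy, h | h⟩
        · exact Or.inl ⟨h.1, h.2⟩
        · exact Or.inr ⟨h.1, h.2⟩
      · rintro (⟨rfl, rfl⟩ | ⟨rfl, rfl⟩)
        · exact ⟨hab, Or.inl ⟨rfl, rfl⟩⟩
        · exact ⟨hab.symm, Or.inr ⟨rfl, rfl⟩⟩
    rw [hfil]
    have hne : ((a, b) : Fin n × Fin n) ≠ (b, a) := by
      simp [Prod.ext_iff]; intro h; exact absurd h hab
    rw [Finset.sum_insert (by simp [hne]), Finset.sum_singleton]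
    have : s(b, a) = s(a, b) := Sym2.eq_swap
    rw [this]
    ring

lemma exists_balanced_vertex (n : ℕ) (hn : 4 ≤ n) (c : Sym2 (Fin n) → ℤ)
    (hc : ∀ e ∈ (⊤ : SimpleGraph (Fin n)).edgeSet, c e = 1 ∨ c e = -1)
    (hzero : ∑ e ∈ Finset.univ.filter (fun e => e ∈ (⊤ : SimpleGraph (Fin n)).edgeSet), c e = 0)
    (htwice : ∑ u : Fin n, ∑ y ∈ univ.erase u, c s(u, y)
      = 2 * ∑ e ∈ Finset.univ.filter (fun e => e ∈ (⊤ : SimpleGraph (Fin n)).edgeSet), c e) :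
    ∃ u : Fin n, |((∑ y ∈ univ.erase u, c s(u, y) : ℤ) : ℝ)| ≤ (n : ℝ)/2 - 1 := by
  set s : Fin n → ℤ := fun u => ∑ y ∈ univ.erase u, c s(u, y) with hs
  by_contra hcon
  push_neg at hcon
  have habs : ∀ u y : Fin n, u ≠ y → |c s(u, y)| ≤ 1 := by
    intro u y huy
    rcases hc s(u, y) ((SimpleGraph.mem_edgeSet _).mpr huy) with h | h <;> rw [h] <;> norm_num
  have htot : ∑ u : Fin n, s u = 0 := by rw [htwice, hzero]; ring
  set P := univ.filter (fun u : Fin n => 0 < s u) with hP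
  set M := univ.filter (fun u : Fin n => ¬ 0 < s u) with hM
  have hnR : (4 : ℝ) ≤ n := by exact_mod_cast hn
  have hPbig : ∀ u ∈ P, ((n : ℝ)/2 - 1) < (s u : ℝ) := by
    intro u hu
    have h1 := hcon u
    have h2 : (0 : ℤ) < s u := (Finset.mem_filter.mp hu).2
    rwa [abs_of_pos (by exact_mod_cast h2 : (0:ℝ) < (s u : ℝ))] at h1
  have hMsmall : ∀ u ∈ M, (s u : ℝ) < -((n : ℝ)/2 - 1) := by
    intro u hu
    have h1 := hcon u
    have h2 : s u ≤ 0 := le_of_not_gt (Finset.mem_filter.mp hu).2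
    rw [abs_of_nonpos (by exact_mod_cast h2 : (s u : ℝ) ≤ 0)] at h1
    linarith
  have huniv0 : (univ : Finset (Fin n)).Nonempty := by
    rw [← Finset.card_pos]; simp; omega
  have hPne : P.Nonempty := by
    rcases Finset.eq_empty_or_nonempty P with h | h
    · exfalso
      have hMall : M = univ := by
        ext u; simp only [hM, Finset.mem_filter, Finset.mem_univ, true_and, iff_true]
        intro hlt
        exact absurd (Finset.mem_filter.mpr ⟨Finset.mem_univ u, hlt⟩) (by rw [← hP, h]; simp)
      have : ∑ u : Fin n, (s u : ℝ) < ∑ _u : Fin n, (0:ℝ) := by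
        refine Finset.sum_lt_sum_of_nonempty huniv0 fun u hu => ?_
        have := hMsmall u (by rw [hMall]; exact hu)
        nlinarith
      rw [Finset.sum_const, smul_zero] at this
      have h0 : ∑ u : Fin n, (s u : ℝ) = 0 := by exact_mod_cast congrArg (Int.cast : ℤ → ℝ) htot
      linarith
    · exact h
  have hMne : M.Nonempty := by
    rcases Finset.eq_empty_or_nonempty M with h | h
    · exfalso
      have hPall : P = univ := by
        ext u; simp only [hP, Finset.mem_filter, Finset.mem_univ, true_and, iff_true]
        by_contra hlt
        exact absurd (Finset.mem_filter.mpr ⟨Finset.mem_univ u, hlt⟩) (by rw [← hM, h]; simp)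
      have : ∑ _u : Fin n, (0:ℝ) < ∑ u : Fin n, (s u : ℝ) := by
        refine Finset.sum_lt_sum_of_nonempty huniv0 fun u hu => ?_
        have := hPbig u (by rw [hPall]; exact hu)
        nlinarith
      rw [Finset.sum_const, smul_zero] at this
      have h0 : ∑ u : Fin n, (s u : ℝ) = 0 := by exact_mod_cast congrArg (Int.cast : ℤ → ℝ) htot
      linarith
    · exact h
  -- split sums
  have hsplit : ∀ u : Fin n, s u
      = ∑ y ∈ P.erase u, c s(u, y) + ∑ y ∈ M.erase u, c s(u, y) := by
    intro u
    rw [hs]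
    simp only
    rw [← Finset.sum_filter_add_sum_filter_not (univ.erase u) (fun y => 0 < s y)]
    congr 1 <;> rw [Finset.filter_erase]
  have hPM : ∀ u : Fin n, u ∈ P → M.erase u = M := by
    intro u hu
    apply Finset.erase_eq_of_notMem
    simp only [hM, Finset.mem_filter, not_and, not_not]
    intro _
    exact (Finset.mem_filter.mp hu).2
  have hMP : ∀ u : Fin n, u ∈ M → P.erase u = P := by
    intro u hu
    apply Finset.erase_eq_of_notMem
    simp only [hP, Finset.mem_filter, not_and, not_lt]
    intro _
    exact le_of_not_gt (Finset.mem_filter.mp hu).2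
  set SPP := ∑ u ∈ P, ∑ y ∈ P.erase u, c s(u, y) with hSPP
  set SMM := ∑ u ∈ M, ∑ y ∈ M.erase u, c s(u, y) with hSMM
  set SPM := ∑ u ∈ P, ∑ y ∈ M, c s(u, y) with hSPM
  set SMP := ∑ u ∈ M, ∑ y ∈ P, c s(u, y) with hSMP
  have hTPsplit : ∑ u ∈ P, s u = SPP + SPM := by
    rw [← Finset.sum_add_distrib]
    refine Finset.sum_congr rfl fun u hu => ?_
    rw [hsplit u, hPM u hu]
  have hTMsplit : ∑ u ∈ M, s u = SMP + SMM := by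
    rw [add_comm, ← Finset.sum_add_distrib]
    refine Finset.sum_congr rfl fun u hu => ?_
    rw [hsplit u, hMP u hu]
    exact add_comm _ _
  have hPMMP : SPM = SMP := by
    rw [hSPM, Finset.sum_comm]
    refine Finset.sum_congr rfl fun y _ => Finset.sum_congr rfl fun u _ => ?_
    rw [Sym2.eq_swap]
  have hsum0 : ∑ u ∈ P, s u + ∑ u ∈ M, s u = 0 := by
    rw [Finset.sum_filter_add_sum_filter_not]; exact htot
  -- absolute bounds
  have hSPPabs : |SPP| ≤ (P.card : ℤ) * ((P.card : ℤ) - 1) := by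
    calc |SPP| ≤ ∑ u ∈ P, |∑ y ∈ P.erase u, c s(u, y)| := Finset.abs_sum_le_sum_abs _ _
    _ ≤ ∑ u ∈ P, ((P.card : ℤ) - 1) := by
        refine Finset.sum_le_sum fun u hu => ?_
        calc |∑ y ∈ P.erase u, c s(u, y)| ≤ ∑ y ∈ P.erase u, |c s(u, y)| :=
              Finset.abs_sum_le_sum_abs _ _
        _ ≤ ∑ _y ∈ P.erase u, (1:ℤ) := by
            refine Finset.sum_le_sum fun y hy => ?_
            exact habs u y (Ne.symm (Finset.mem_erase.mp hy).1)
        _ = ((P.erase u).card : ℤ) := by rw [Finset.sum_const]; simp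
        _ = (P.card : ℤ) - 1 := by
            rw [Finset.card_erase_of_mem hu]
            have : 1 ≤ P.card := Finset.card_pos.mpr ⟨u, hu⟩
            push_cast [Nat.cast_sub this]
            ring
    _ = (P.card : ℤ) * ((P.card : ℤ) - 1) := by rw [Finset.sum_const]; simp [mul_comm]
  have hSMMabs : |SMM| ≤ (M.card : ℤ) * ((M.card : ℤ) - 1) := by
    calc |SMM| ≤ ∑ u ∈ M, |∑ y ∈ M.erase u, c s(u, y)| := Finset.abs_sum_le_sum_abs _ _
    _ ≤ ∑ u ∈ M, ((M.card : ℤ) - 1) := by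
        refine Finset.sum_le_sum fun u hu => ?_
        calc |∑ y ∈ M.erase u, c s(u, y)| ≤ ∑ y ∈ M.erase u, |c s(u, y)| :=
              Finset.abs_sum_le_sum_abs _ _
        _ ≤ ∑ _y ∈ M.erase u, (1:ℤ) := by
            refine Finset.sum_le_sum fun y hy => ?_
            exact habs u y (Ne.symm (Finset.mem_erase.mp hy).1)
        _ = ((M.erase u).card : ℤ) := by rw [Finset.sum_const]; simp
        _ = (M.card : ℤ) - 1 := by
            rw [Finset.card_erase_of_mem hu]
            have : 1 ≤ M.card := Finset.card_pos.mpr ⟨u, hu⟩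
            push_cast [Nat.cast_sub this]
            ring
    _ = (M.card : ℤ) * ((M.card : ℤ) - 1) := by rw [Finset.sum_const]; simp [mul_comm]
  -- real versions
  have hpq : P.card + M.card = n := by
    rw [hP, hM, Finset.card_filter_add_card_filter_not]; simp
  set p := (P.card : ℝ) with hpdef
  set q := (M.card : ℝ) with hqdef
  have hpq' : p + q = n := by rw [hpdef, hqdef]; exact_mod_cast hpq
  have hp1 : 1 ≤ p := by rw [hpdef]; exact_mod_cast Finset.card_pos.mpr hPne
  have hq1 : 1 ≤ q := by rw [hqdef]; exact_mod_cast Finset.card_pos.mpr hMne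
  have hTPlow : p * ((n:ℝ)/2 - 1) < ((∑ u ∈ P, s u : ℤ) : ℝ) := by
    push_cast
    calc p * ((n:ℝ)/2 - 1) = ∑ _u ∈ P, ((n:ℝ)/2 - 1) := by
          rw [Finset.sum_const, nsmul_eq_mul, hpdef]
    _ < ∑ u ∈ P, (s u : ℝ) := Finset.sum_lt_sum_of_nonempty hPne hPbig
  have hTMhigh : ((∑ u ∈ M, s u : ℤ) : ℝ) < q * (-((n:ℝ)/2 - 1)) := by
    push_cast
    calc ∑ u ∈ M, (s u : ℝ) < ∑ _u ∈ M, (-((n:ℝ)/2 - 1)) :=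
          Finset.sum_lt_sum_of_nonempty hMne hMsmall
    _ = q * (-((n:ℝ)/2 - 1)) := by rw [Finset.sum_const, nsmul_eq_mul, hqdef]
  have hkey : 2 * (∑ u ∈ P, s u) = SPP - SMM := by
    have h1 : ∑ u ∈ P, s u - ∑ u ∈ M, s u = SPP - SMM := by
      rw [hTPsplit, hTMsplit, hPMMP]; ring
    linarith [hsum0, h1]
  -- final contradiction
  have hkeyR : 2 * ((∑ u ∈ P, s u : ℤ) : ℝ) ≤ p * (p - 1) + q * (q - 1) := by
    have hA : ((SPP : ℤ) : ℝ) ≤ p * (p - 1) := by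
      have := (le_abs_self SPP).trans hSPPabs
      rw [hpdef]; exact_mod_cast this
    have hB : -(((SMM : ℤ) : ℝ)) ≤ q * (q - 1) := by
      have := (neg_le_abs SMM).trans hSMMabs
      rw [hqdef]; exact_mod_cast this
    have hC : 2 * ((∑ u ∈ P, s u : ℤ) : ℝ) = ((SPP : ℤ) : ℝ) - ((SMM : ℤ) : ℝ) := by
      exact_mod_cast congrArg (Int.cast : ℤ → ℝ) hkey
    linarith
  have hTM0 : ((∑ u ∈ M, s u : ℤ) : ℝ) = -((∑ u ∈ P, s u : ℤ) : ℝ) := by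
    have := congrArg (Int.cast : ℤ → ℝ) hsum0
    push_cast at this ⊢
    linarith
  set T := ((∑ u ∈ P, s u : ℤ) : ℝ) with hT
  have h2 : p * ((n:ℝ) - 2) < 2 * T := by
    have e : p * ((n:ℝ) - 2) = 2 * (p * ((n:ℝ)/2 - 1)) := by ring
    linarith [hTPlow, e]
  have h3 : q * ((n:ℝ) - 2) < 2 * T := by
    rw [hTM0] at hTMhigh
    have e : q * ((n:ℝ) - 2) = -2 * (q * (-((n:ℝ)/2 - 1))) := by ring
    linarith [hTMhigh, e]
  clear hcon habs htot hPbig hMsmall hsplit hPM hMP hTPsplit hTMsplit hPMMP hsum0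
  clear hSPPabs hSMMabs hTPlow hTMhigh hkey hTM0
  rcases le_total p q with hle | hle
  · nlinarith [mul_nonneg (by linarith : (0:ℝ) ≤ p - 1) (by linarith : (0:ℝ) ≤ q - p)]
  · nlinarith [mul_nonneg (by linarith : (0:ℝ) ≤ q - 1) (by linarith : (0:ℝ) ≤ p - q)]

lemma concat_isPath' {V : Type*} {G : SimpleGraph V} {u v w : V} {p : G.Walk u v}
    (hp : p.IsPath) (h : G.Adj v w) (hw : w ∉ p.support) : (p.concat h).IsPath := by
  rw [← SimpleGraph.Walk.isPath_reverse_iff, SimpleGraph.Walk.reverse_concat]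
  rw [SimpleGraph.Walk.cons_isPath_iff]
  refine ⟨(SimpleGraph.Walk.isPath_reverse_iff p).mpr hp, ?_⟩
  rw [SimpleGraph.Walk.support_reverse, List.mem_reverse]
  exact hw

lemma acyclic_edge_bound {V : Type*} [Fintype V] [DecidableEq V] [Nonempty V]
    (G : SimpleGraph V) [DecidableRel G.Adj] (hG : G.IsAcyclic) :
    G.edgeFinset.card + 1 ≤ Fintype.card V := by
  classical
  set r : V → V := fun x => Quot.out (G.connectedComponentMk x) with hrdef
  have hr : ∀ x, G.Reachable (r x) x := by
    intro x
    apply SimpleGraph.ConnectedComponent.exact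
    exact Quot.out_eq (G.connectedComponentMk x)
  have hrr : ∀ x y, G.Reachable x y → r x = r y := by
    intro x y h
    rw [hrdef]
    simp only
    rw [SimpleGraph.ConnectedComponent.sound h]
  set d : V → ℕ := fun x => G.dist (r x) x with hddef
  have hpath : ∀ x, ∃ p : G.Walk (r x) x, p.IsPath ∧ p.length = d x := by
    intro x
    obtain ⟨w, hw⟩ := (hr x).exists_walk_length_eq_dist
    exact ⟨w.bypass, w.bypass_isPath,
      le_antisymm (le_trans w.length_bypass_le (le_of_eq hw)) (G.dist_le _)⟩
  -- distances of support vertices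
  have hsupp : ∀ (x z : V) (p : G.Walk (r x) x), p.length = d x → z ∈ p.support →
      (d z ≤ d x ∧ (z ≠ x → d z < d x)) := by
    intro x z p hl hz
    have hrz : r z = r x := by
      have : G.Reachable z x := (p.dropUntil z hz).reachable
      rw [hrr z x this]
    have h1 : d z ≤ (p.takeUntil z hz).length := by
      rw [hddef]; simp only; rw [hrz]; exact G.dist_le _
    have h2 : (p.takeUntil z hz).length + (p.dropUntil z hz).length = p.length := by
      have := congrArg SimpleGraph.Walk.length (p.take_spec hz)
      rwa [SimpleGraph.Walk.length_append] at this
    constructor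
    · omega
    · intro hne
      have h3 : (p.dropUntil z hz).length ≠ 0 := by
        intro h0
        exact hne (SimpleGraph.Walk.eq_of_length_eq_zero h0)
      omega
  -- adjacent vertices have distance difference one
  have hadj : ∀ x y : V, G.Adj x y → d y = d x + 1 ∨ d x = d y + 1 := by
    intro x y hxy
    have hrxy : r x = r y := hrr _ _ hxy.reachable
    obtain ⟨px, hpx, hlx⟩ := hpath x
    obtain ⟨py, hpy, hly⟩ := hpath y
    have hyx : d y ≤ d x + 1 := by
      have : G.dist (r y) y ≤ ((px.copy hrxy rfl).concat hxy).length := G.dist_le _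
      rwa [SimpleGraph.Walk.length_concat, SimpleGraph.Walk.length_copy, hlx] at this
    have hxy' : d x ≤ d y + 1 := by
      have : G.dist (r x) x ≤ ((py.copy hrxy.symm rfl).concat hxy.symm).length := G.dist_le _
      rwa [SimpleGraph.Walk.length_concat, SimpleGraph.Walk.length_copy, hly] at this
    have hne : d x ≠ d y := by
      intro heq
      by_cases hy : y ∈ px.support
      · have := (hsupp x y px hlx hy).2 (Ne.symm hxy.ne)
        omega
      · have hq : (px.concat hxy).IsPath := concat_isPath' hpx hxy hy
        have hq' : ((px.concat hxy).copy hrxy rfl).IsPath := (px.concat hxy).isPath_copy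
          hrxy rfl |>.mpr hq
        have huniq := hG.path_unique ⟨(px.concat hxy).copy hrxy rfl, hq'⟩ ⟨py, hpy⟩
        have hlen := congrArg (fun q : G.Path (r y) y => q.1.length) huniq
        simp only [SimpleGraph.Walk.length_copy, SimpleGraph.Walk.length_concat] at hlen
        rw [hlx, hly] at hlen
        omega
    omega
  -- choose deeper endpoint for each edge
  have hQ : ∀ e ∈ G.edgeFinset, ∃ pr : V × V,
      e = s(pr.1, pr.2) ∧ G.Adj pr.1 pr.2 ∧ d pr.2 = d pr.1 + 1 := by
    intro e he
    induction e with
    | _ a b =>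
      have hab : G.Adj a b := by rwa [SimpleGraph.mem_edgeFinset, SimpleGraph.mem_edgeSet] at he
      rcases hadj a b hab with h | h
      · exact ⟨(a, b), rfl, hab, h⟩
      · exact ⟨(b, a), Sym2.eq_swap, hab.symm, h⟩
  choose pr hpr1 hpr2 hpr3 using hQ
  have x0 : V := Classical.arbitrary V
  set f : Sym2 V → V := fun e => if h : e ∈ G.edgeFinset then (pr e h).2 else x0 with hfdef
  have hd1 : ∀ (e) (he : e ∈ G.edgeFinset), 1 ≤ d (f e) := by
    intro e he
    rw [hfdef]; simp only [dif_pos he]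
    rw [hpr3 e he]; omega
  have hinj : Set.InjOn f ↑G.edgeFinset := by
    intro e1 h1' e2 h2' hfe
    have h1 : e1 ∈ G.edgeFinset := by exact_mod_cast h1'
    have h2 : e2 ∈ G.edgeFinset := by exact_mod_cast h2'
    rw [hfdef] at hfe
    simp only [dif_pos h1, dif_pos h2] at hfe
    set x1 := (pr e1 h1).1 with hx1
    set y := (pr e1 h1).2 with hy
    set x2 := (pr e2 h2).1 with hx2
    have hy2 : (pr e2 h2).2 = y := hfe.symm
    have had1 : G.Adj x1 y := hpr2 e1 h1
    have had2 : G.Adj x2 y := by rw [← hy2]; exact hpr2 e2 h2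
    have hdy1 : d y = d x1 + 1 := hpr3 e1 h1
    have hdy2 : d y = d x2 + 1 := by rw [← hy2]; exact hpr3 e2 h2
    obtain ⟨p1, hp1, hl1⟩ := hpath x1
    obtain ⟨p2, hp2, hl2⟩ := hpath x2
    have hr1 : r x1 = r y := hrr _ _ had1.reachable
    have hr2 : r x2 = r y := hrr _ _ had2.reachable
    have hy1s : y ∉ p1.support := by
      intro hy1s
      have := (hsupp x1 y p1 hl1 hy1s).1
      omega
    have hy2s : y ∉ p2.support := by
      intro hy2s
      have := (hsupp x2 y p2 hl2 hy2s).1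
      omega
    have hq1 : ((p1.copy hr1 rfl).concat had1).IsPath := by
      apply concat_isPath' _ had1
      · rwa [SimpleGraph.Walk.support_copy]
      · rwa [SimpleGraph.Walk.isPath_copy]
    have hq2 : ((p2.copy hr2 rfl).concat had2).IsPath := by
      apply concat_isPath' _ had2
      · rwa [SimpleGraph.Walk.support_copy]
      · rwa [SimpleGraph.Walk.isPath_copy]
    have huniq := hG.path_unique ⟨(p1.copy hr1 rfl).concat had1, hq1⟩
      ⟨(p2.copy hr2 rfl).concat had2, hq2⟩
    have hwalk : (p1.copy hr1 rfl).concat had1 = (p2.copy hr2 rfl).concat had2 :=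
      congrArg Subtype.val huniq
    obtain ⟨hv, -⟩ := SimpleGraph.Walk.concat_inj hwalk
    have hx12 : x1 = x2 := hv
    rw [hpr1 e1 h1, hpr1 e2 h2, ← hx1, ← hx2, ← hy, hy2, hx12]
  have hroot : d (r x0) = 0 := by
    have h1 : r (r x0) = r x0 := hrr (r x0) x0 (hr x0)
    rw [hddef]
    simp only
    rw [h1, SimpleGraph.dist_self]
  have hmaps : ∀ e ∈ G.edgeFinset, f e ∈ univ.erase (r x0) := by
    intro e he
    rw [Finset.mem_erase]
    refine ⟨?_, Finset.mem_univ _⟩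
    intro heq
    have := hd1 e he
    rw [heq, hroot] at this
    omega
  have hcard := Finset.card_le_card_of_injOn f hmaps hinj
  rw [Finset.card_erase_of_mem (Finset.mem_univ _), Finset.card_univ] at hcard
  have : 1 ≤ Fintype.card V := Fintype.card_pos
  omega

lemma choose_a (n dv E p m : ℕ) (hpm : p + m = n - 1) (hn4 : 4 ≤ n) (hE : E + 1 ≤ n)
    (hdE : dv ≤ E) (hs : |(p : ℝ) - m| ≤ (n : ℝ)/2 - 1) (hd : (n : ℝ)/2 + 1 ≤ dv) :
    ∃ a : ℕ, a ≤ p ∧ a ≤ dv ∧ dv - a ≤ m ∧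
      |2*(a : ℝ) - dv| + ((E : ℝ) - dv) ≤ (n : ℝ)/2 - 1 := by
  have hdn : dv ≤ n - 1 := le_trans hdE (by omega)
  have hER : (E : ℝ) ≤ (n : ℝ) - 1 := by
    have : (E : ℝ) + 1 ≤ n := by exact_mod_cast hE
    linarith
  have hn1 : ((n - 1 : ℕ) : ℝ) = (n : ℝ) - 1 := by
    rw [Nat.cast_sub (by omega)]; simp
  have hpmR : (p : ℝ) + m = (n : ℝ) - 1 := by
    rw [← hn1]; exact_mod_cast hpm
  have habs := abs_le.mp hs
  by_cases hp : 2 * p < dv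
  · refine ⟨p, le_refl _, by omega, by omega, ?_⟩
    have h2p : 2 * (p:ℝ) < dv := by exact_mod_cast hp
    rw [abs_of_nonpos (by linarith)]
    -- 2p ≥ n/2
    have h1 : -((n:ℝ)/2 - 1) ≤ (p:ℝ) - m := habs.1
    nlinarith
  · by_cases hm : 2 * m < dv
    · refine ⟨dv - m, by omega, by omega, by omega, ?_⟩
      have h2m : 2 * (m:ℝ) < dv := by exact_mod_cast hm
      have hcast : ((dv - m : ℕ) : ℝ) = (dv : ℝ) - m := by
        rw [Nat.cast_sub (by omega)]
      rw [hcast, abs_of_nonneg (by linarith)]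
      have h1 : (p:ℝ) - m ≤ (n:ℝ)/2 - 1 := habs.2
      nlinarith
    · refine ⟨dv / 2, by omega, by omega, by omega, ?_⟩
      have h1 : 2 * (dv / 2) = dv ∨ 2 * (dv / 2) + 1 = dv := by omega
      have h2 : |2*((dv/2 : ℕ) : ℝ) - dv| ≤ 1 := by
        rcases h1 with h | h
        · have he : 2*((dv/2 : ℕ) : ℝ) = dv := by exact_mod_cast h
          rw [show 2*((dv/2 : ℕ) : ℝ) - dv = 0 by linarith]
          simp
        · have he : 2*((dv/2 : ℕ) : ℝ) + 1 = dv := by exact_mod_cast h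
          rw [show 2*((dv/2 : ℕ) : ℝ) - dv = -1 by linarith]
          norm_num
      have hdvR : (dv : ℝ) ≥ (n:ℝ)/2 + 1 := hd
      linarith

theorem stmt_9 (n : ℕ) (c : Sym2 (Fin n) → ℤ)
    (hc : ∀ e ∈ (⊤ : SimpleGraph (Fin n)).edgeSet, c e = 1 ∨ c e = -1)
    (hzero : ∑ e ∈ Finset.univ.filter (fun e => e ∈ (⊤ : SimpleGraph (Fin n)).edgeSet), c e = 0)
    (F : SimpleGraph (Fin n)) [DecidableRel F.Adj] (hF : F.IsAcyclic)
    (hΔ : (F.maxDegree : ℝ) ≥ (n : ℝ)/2 + 1) :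
    ∃ F' : SimpleGraph (Fin n), Nonempty (F ≃g F') ∧
      (|∑ e ∈ Finset.univ.filter (fun e => e ∈ F'.edgeSet), c e| : ℝ) ≤ (n : ℝ)/2 - 1 := by
  classical
  have hn0 : 0 < n := by
    rcases Nat.eq_zero_or_pos n with h | h
    · exfalso
      subst h
      have hmax : F.maxDegree = 0 := by
        rw [SimpleGraph.maxDegree]
        rw [show (univ : Finset (Fin 0)) = ∅ from rfl]
        rfl
      rw [hmax] at hΔ
      norm_num at hΔ
    · exact h
  haveI : Nonempty (Fin n) := ⟨⟨0, hn0⟩⟩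
  obtain ⟨v, hv⟩ := F.exists_maximal_degree_vertex
  set dv := F.degree v with hdvdef
  have hdR : (n : ℝ)/2 + 1 ≤ (dv : ℝ) := by rw [hv] at hΔ; exact hΔ
  have hdlt : dv < n := by
    have := F.degree_lt_card_verts v
    rwa [Fintype.card_fin] at this
  have hn4 : 4 ≤ n := by
    have h1 : (dv : ℝ) ≤ (n : ℝ) - 1 := by
      have : (dv : ℝ) + 1 ≤ (n : ℝ) := by exact_mod_cast hdlt
      linarith
    have h2 : (4 : ℝ) ≤ (n : ℝ) := by linarith
    exact_mod_cast h2
  have hE : F.edgeFinset.card + 1 ≤ n := by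
    have := acyclic_edge_bound F hF
    rwa [Fintype.card_fin] at this
  obtain ⟨u, hu⟩ := exists_balanced_vertex n hn4 c hc hzero (sum_pairs_eq_twice n c)
  set Pu := (univ.erase u).filter (fun y => c s(u, y) = 1) with hPudef
  set Mu := (univ.erase u).filter (fun y => ¬ c s(u, y) = 1) with hMudef
  have hPu1 : ∀ y ∈ Pu, c s(u, y) = 1 := fun y hy => (Finset.mem_filter.mp hy).2
  have hMu1 : ∀ y ∈ Mu, c s(u, y) = -1 := by
    intro y hy
    rw [hMudef, Finset.mem_filter, Finset.mem_erase] at hy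
    rcases hc s(u, y) ((SimpleGraph.mem_edgeSet _).mpr (Ne.symm hy.1.1)) with h | h
    · exact absurd h hy.2
    · exact h
  set p := Pu.card with hpdef
  set m := Mu.card with hmdef
  have hpm : p + m = n - 1 := by
    rw [hpdef, hmdef, hPudef, hMudef,
      Finset.card_filter_add_card_filter_not,
      Finset.card_erase_of_mem (Finset.mem_univ u), Finset.card_univ, Fintype.card_fin]
  have hsu : (∑ y ∈ univ.erase u, c s(u, y)) = (p : ℤ) - m := by
    rw [← Finset.sum_filter_add_sum_filter_not (univ.erase u) (fun y => c s(u, y) = 1)]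
    have e1 : ∑ y ∈ Pu, c s(u, y) = (p : ℤ) := by
      rw [Finset.sum_congr rfl hPu1, Finset.sum_const]; simp [hpdef]
    have e2 : ∑ y ∈ Mu, c s(u, y) = -(m : ℤ) := by
      rw [Finset.sum_congr rfl hMu1, Finset.sum_const]; simp [hmdef]
    rw [← hPudef, ← hMudef, e1, e2]
    ring
  have hsuR : |(p : ℝ) - m| ≤ (n : ℝ)/2 - 1 := by
    rw [hsu] at hu
    have : (((p : ℤ) - m : ℤ) : ℝ) = (p : ℝ) - m := by push_cast; ring
    rwa [this] at hu
  -- the star/rest split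
  set star := F.edgeFinset.filter (fun e => v ∈ e) with hstardef
  set rest := F.edgeFinset.filter (fun e => ¬ v ∈ e) with hrestdef
  have hstarimg : star = (F.neighborFinset v).image (fun w => s(v, w)) := by
    ext e
    induction e with
    | _ x y =>
      simp only [hstardef, Finset.mem_filter, Finset.mem_image,
        SimpleGraph.mem_edgeFinset, SimpleGraph.mem_edgeSet, SimpleGraph.mem_neighborFinset]
      constructor
      · rintro ⟨hadj, hmem⟩
        rcases Sym2.mem_iff.mp hmem with h | h
        · subst h
          exact ⟨y, hadj, rfl⟩
        · subst h
          exact ⟨x, hadj.symm, Sym2.eq_swap⟩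
      · rintro ⟨w, hw, heq⟩
        rw [Sym2.eq_iff] at heq
        rcases heq with ⟨h1, h2⟩ | ⟨h1, h2⟩
        · subst h1; subst h2; exact ⟨hw, Sym2.mem_mk_left _ _⟩
        · subst h1; subst h2; exact ⟨hw.symm, Sym2.mem_mk_right _ _⟩
  have hsinj : ∀ w1 ∈ F.neighborFinset v, ∀ w2 ∈ F.neighborFinset v,
      s(v, w1) = s(v, w2) → w1 = w2 := fun w1 _ w2 _ h => Sym2.congr_right.mp h
  have hstarcard : star.card = dv := by
    rw [hstarimg, Finset.card_image_of_injOn (fun w1 h1 w2 h2 h => hsinj w1 h1 w2 h2 h)]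
    exact F.card_neighborFinset_eq_degree v
  have hdE : dv ≤ F.edgeFinset.card := by
    rw [← hstarcard, hstardef]
    exact Finset.card_filter_le _ _
  have hrestcard : star.card + rest.card = F.edgeFinset.card := by
    rw [hstardef, hrestdef, Finset.card_filter_add_card_filter_not]
  obtain ⟨a, hap, hadv, ham, hbound⟩ :=
    choose_a n dv F.edgeFinset.card p m hpm hn4 hE hdE hsuR hdR
  obtain ⟨Xp, hXpsub, hXpcard⟩ := Finset.exists_subset_card_eq (show a ≤ Pu.card from hap)
  obtain ⟨Xm, hXmsub, hXmcard⟩ := Finset.exists_subset_card_eq (show dv - a ≤ Mu.card from ham)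
  set X := Xp ∪ Xm with hXdef
  have hdisj : Disjoint Xp Xm := by
    have hd0 : Disjoint Pu Mu := by
      rw [hPudef, hMudef]
      exact Finset.disjoint_filter_filter_not _ _ _
    exact hd0.mono hXpsub hXmsub
  have hXcard : X.card = dv := by
    rw [hXdef, Finset.card_union_of_disjoint hdisj, hXpcard, hXmcard]
    omega
  have hXerase : X ⊆ univ.erase u := by
    rw [hXdef]
    apply Finset.union_subset
    · exact hXpsub.trans (Finset.filter_subset _ _)
    · exact hXmsub.trans (Finset.filter_subset _ _)
  have hXu : u ∉ X := fun h => (Finset.mem_erase.mp (hXerase h)).1 rfl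
  -- build the permutation
  set A := insert v (F.neighborFinset v) with hAdef
  set B := insert u X with hBdef
  have hvN : v ∉ F.neighborFinset v := by
    simp [SimpleGraph.mem_neighborFinset]
  have hcards : A.card = B.card := by
    rw [hAdef, hBdef, Finset.card_insert_of_notMem hvN, Finset.card_insert_of_notMem hXu,
      hXcard]
    rw [F.card_neighborFinset_eq_degree v]
  obtain ⟨σ, hσ⟩ := perm_of_card_eq A B hcards
  set τ : Equiv.Perm (Fin n) := σ.trans (Equiv.swap (σ v) u) with hτdef
  have hσvB : σ v ∈ B := (hσ v).mpr (Finset.mem_insert_self _ _)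
  have huB : u ∈ B := Finset.mem_insert_self _ _
  have hτmem : ∀ x, τ x ∈ B ↔ x ∈ A := by
    intro x
    rw [hτdef]
    simp only [Equiv.trans_apply]
    rw [← hσ x]
    constructor
    · intro h
      rcases eq_or_ne (σ x) (σ v) with h1 | h1
      · rw [h1]; exact hσvB
      · rcases eq_or_ne (σ x) u with h2 | h2
        · rw [h2]; exact huB
        · rwa [Equiv.swap_apply_of_ne_of_ne h1 h2] at h
    · intro h
      rcases eq_or_ne (σ x) (σ v) with h1 | h1
      · rw [h1, Equiv.swap_apply_left]; exact huB
      · rcases eq_or_ne (σ x) u with h2 | h2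
        · rw [h2, Equiv.swap_apply_right]; exact hσvB
        · rwa [Equiv.swap_apply_of_ne_of_ne h1 h2]
  have hτv : τ v = u := by
    rw [hτdef]
    simp [Equiv.swap_apply_left]
  have hτN : ∀ w ∈ F.neighborFinset v, τ w ∈ X := by
    intro w hw
    have h1 : τ w ∈ B := (hτmem w).mpr (Finset.mem_insert_of_mem hw)
    have h2 : τ w ≠ u := by
      rw [← hτv]
      intro hcontra
      have hwv := τ.injective hcontra
      rw [hwv] at hw
      exact hvN hw
    rcases Finset.mem_insert.mp h1 with h | h
    · exact absurd h h2
    · exact h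
  -- conclude
  refine ⟨F.map τ.toEmbedding, ⟨SimpleGraph.Iso.map τ F⟩, ?_⟩
  -- star sum value (integer)
  have hstar_sum : ∑ e ∈ star, c (Sym2.map τ e) = (a : ℤ) - ((dv - a : ℕ) : ℤ) := by
    rw [hstarimg, Finset.sum_image (fun w1 h1 w2 h2 h => hsinj w1 h1 w2 h2 h)]
    have hc1 : ∀ w ∈ F.neighborFinset v, c (Sym2.map τ s(v, w)) = c s(u, τ w) := by
      intro w hw
      rw [Sym2.map_pair_eq, hτv]
    rw [Finset.sum_congr rfl hc1]
    have himgX : (F.neighborFinset v).image τ = X := by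
      apply Finset.eq_of_subset_of_card_le
      · intro x hx
        obtain ⟨w, hw, rfl⟩ := Finset.mem_image.mp hx
        exact hτN w hw
      · rw [hXcard, Finset.card_image_of_injective _ τ.injective,
          F.card_neighborFinset_eq_degree v]
    have hreindex : ∑ w ∈ F.neighborFinset v, c s(u, τ w) = ∑ x ∈ X, c s(u, x) := by
      rw [← himgX, Finset.sum_image (fun w1 _ w2 _ h => τ.injective h)]
    rw [hreindex, hXdef, Finset.sum_union hdisj]
    have e1 : ∑ x ∈ Xp, c s(u, x) = (a : ℤ) := by
      rw [Finset.sum_congr rfl (fun x hx => hPu1 x (hXpsub hx)), Finset.sum_const, hXpcard]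
      simp
    have e2 : ∑ x ∈ Xm, c s(u, x) = -((dv - a : ℕ) : ℤ) := by
      rw [Finset.sum_congr rfl (fun x hx => hMu1 x (hXmsub hx)), Finset.sum_const, hXmcard]
      simp
    rw [e1, e2]
    ring
  -- rest sum bound (integer)
  have hcabs : ∀ e ∈ F.edgeFinset, |c (Sym2.map τ e)| ≤ 1 := by
    intro e he
    induction e with
    | _ x y =>
      have hxy : F.Adj x y := by rwa [SimpleGraph.mem_edgeFinset, SimpleGraph.mem_edgeSet] at he
      have hne : τ x ≠ τ y := fun h => hxy.ne (τ.injective h)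
      rw [Sym2.map_pair_eq]
      rcases hc s(τ x, τ y) ((SimpleGraph.mem_edgeSet _).mpr hne) with h | h <;> rw [h] <;> norm_num
  have hrest_abs : |∑ e ∈ rest, c (Sym2.map τ e)| ≤ (rest.card : ℤ) := by
    calc |∑ e ∈ rest, c (Sym2.map τ e)| ≤ ∑ e ∈ rest, |c (Sym2.map τ e)| :=
          Finset.abs_sum_le_sum_abs _ _
    _ ≤ ∑ _e ∈ rest, (1 : ℤ) := Finset.sum_le_sum (fun e he =>
          hcabs e (Finset.mem_filter.mp (hrestdef ▸ he)).1)
    _ = (rest.card : ℤ) := by rw [Finset.sum_const]; simp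
  -- main bound, stated for any finset equal to the image
  have hmain : ∀ s : Finset (Sym2 (Fin n)), s = F.edgeFinset.image (Sym2.map τ) →
      |∑ e ∈ s, ((c e : ℤ) : ℝ)| ≤ (n : ℝ)/2 - 1 := by
    intro s hs
    rw [hs, Finset.sum_image (fun e1 _ e2 _ h => Sym2.map.injective τ.injective h)]
    rw [← Finset.sum_filter_add_sum_filter_not F.edgeFinset (fun e => v ∈ e),
      ← hstardef, ← hrestdef]
    have hsplit1 : ∑ e ∈ star, ((c (Sym2.map τ e) : ℤ) : ℝ)
        = (((a : ℤ) - ((dv - a : ℕ) : ℤ) : ℤ) : ℝ) := by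
      rw [← hstar_sum]
      push_cast
      ring
    have hsplit2 : |∑ e ∈ rest, ((c (Sym2.map τ e) : ℤ) : ℝ)| ≤ (rest.card : ℝ) := by
      have h1 : ∑ e ∈ rest, ((c (Sym2.map τ e) : ℤ) : ℝ)
          = ((∑ e ∈ rest, c (Sym2.map τ e) : ℤ) : ℝ) := by push_cast; ring
      rw [h1, ← Int.cast_abs]
      exact_mod_cast hrest_abs
    have hcast1 : (((a : ℤ) - ((dv - a : ℕ) : ℤ) : ℤ) : ℝ) = 2*(a : ℝ) - dv := by
      rw [Int.cast_sub, Int.cast_natCast, Int.cast_natCast, Nat.cast_sub hadv]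
      ring
    have hrestR : ((rest.card : ℕ) : ℝ) = (F.edgeFinset.card : ℝ) - dv := by
      have h2 : rest.card = F.edgeFinset.card - dv := by omega
      rw [h2, Nat.cast_sub hdE]
    calc |∑ e ∈ star, ((c (Sym2.map τ e) : ℤ) : ℝ) + ∑ e ∈ rest, ((c (Sym2.map τ e) : ℤ) : ℝ)|
        ≤ |∑ e ∈ star, ((c (Sym2.map τ e) : ℤ) : ℝ)| + |∑ e ∈ rest, ((c (Sym2.map τ e) : ℤ) : ℝ)| :=
          abs_add_le _ _
    _ ≤ |2*(a : ℝ) - dv| + ((F.edgeFinset.card : ℝ) - dv) := by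
        rw [hsplit1, hcast1]
        have := hsplit2
        rw [hrestR] at this
        linarith
    _ ≤ (n : ℝ)/2 - 1 := hbound
  refine hmain _ ?_
  ext e
  induction e with
  | _ x y =>
    simp only [Finset.mem_filter, Finset.mem_univ, true_and, Finset.mem_image,
      SimpleGraph.mem_edgeFinset, SimpleGraph.mem_edgeSet, SimpleGraph.map_adj,
      Equiv.coe_toEmbedding]
    constructor
    · rintro ⟨_, a', b', hab, ha, hb⟩
      exact ⟨s(a', b'), hab, by rw [Sym2.map_pair_eq, ha, hb]⟩
    · rintro ⟨e', he', heq⟩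
      induction e' with
      | _ a' b' =>
        rw [Sym2.map_pair_eq, Sym2.eq_iff] at heq
        rcases heq with ⟨ha, hb⟩ | ⟨ha, hb⟩
        · exact ⟨by rintro rfl; apply ((SimpleGraph.mem_edgeSet _).mp he').ne; apply τ.injective; rw [ha, hb], a', b', he', ha, hb⟩
        · exact ⟨by rintro rfl; apply ((SimpleGraph.mem_edgeSet _).mp he').ne; apply τ.injective; rw [ha, hb], b', a', he'.symm, hb, ha⟩
end

section
/- Let c : E(K_n) → {-1,1} and suppose F is a P_3-factor of K_n such that no P_3-factor of K_n is zero-sum and c(E(F)) = 2. If u_1u_2u_3 is a path of F with c(u_1u_2) = 1, then c(u_1u_3) = 1. -/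
open Finset

theorem stmt_12 (n m : ℕ) (hn : n = 3 * m)
    (c : Sym2 (Fin n) → ℤ)
    (hc : ∀ e ∈ (⊤ : SimpleGraph (Fin n)).edgeSet, c e = 1 ∨ c e = -1)
    (hnozero : ∀ g' : Fin m × Fin 3 ≃ Fin n,
      ∑ i : Fin m, (c s(g' (i, 0), g' (i, 1)) + c s(g' (i, 1), g' (i, 2))) ≠ 0)
    (g : Fin m × Fin 3 ≃ Fin n)
    (hF : ∑ i : Fin m, (c s(g (i, 0), g (i, 1)) + c s(g (i, 1), g (i, 2))) = 2)
    (i : Fin m) (h1 : c s(g (i, 0), g (i, 1)) = 1) :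
    c s(g (i, 0), g (i, 2)) = 1 := by
  have hne : g (i, 0) ≠ g (i, 2) := by
    intro h
    have := g.injective h
    simp [Prod.ext_iff] at this
  have h02 := hc s(g (i, 0), g (i, 2)) (by simpa using hne)
  rcases h02 with h | h
  · exact h
  · exfalso
    set σ : Fin m × Fin 3 ≃ Fin m × Fin 3 := Equiv.swap (i, 1) (i, 2) with hσ
    apply hnozero (σ.trans g)
    have hterm : ∀ j ∈ Finset.univ.erase i,
        (c s((σ.trans g) (j, 0), (σ.trans g) (j, 1)) +
          c s((σ.trans g) (j, 1), (σ.trans g) (j, 2)))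
        = (c s(g (j, 0), g (j, 1)) + c s(g (j, 1), g (j, 2))) := by
      intro j hj
      have hj' : j ≠ i := Finset.ne_of_mem_erase hj
      simp only [Equiv.trans_apply, hσ]
      rw [Equiv.swap_apply_of_ne_of_ne (by simp [Prod.ext_iff, hj']) (by simp [Prod.ext_iff, hj']),
        Equiv.swap_apply_of_ne_of_ne (by simp [Prod.ext_iff, hj']) (by simp [Prod.ext_iff, hj']),
        Equiv.swap_apply_of_ne_of_ne (by simp [Prod.ext_iff, hj']) (by simp [Prod.ext_iff, hj'])]
    have hi : (c s((σ.trans g) (i, 0), (σ.trans g) (i, 1)) +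
          c s((σ.trans g) (i, 1), (σ.trans g) (i, 2)))
        = c s(g (i, 0), g (i, 2)) + c s(g (i, 1), g (i, 2)) := by
      simp only [Equiv.trans_apply, hσ]
      rw [Equiv.swap_apply_of_ne_of_ne (by simp [Prod.ext_iff]) (by simp [Prod.ext_iff]),
        Equiv.swap_apply_left, Equiv.swap_apply_right,
        show s(g (i, 2), g (i, 1)) = s(g (i, 1), g (i, 2)) from Sym2.eq_swap]
    rw [← Finset.add_sum_erase _ _ (Finset.mem_univ i), hi,
      Finset.sum_congr rfl hterm]
    rw [← Finset.add_sum_erase _ _ (Finset.mem_univ i)] at hF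
    linarith
end
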